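/- arXiv:2301.05416 — 5 statements merged into one kernel-verified Lean document; each statement's English description precedes it below -/
import Mathlib

section
/- For any graph G with n vertices and m edges, the spectral radius satisfies ρ(G) ≤ √(2m − n + 1), with equality if and only if G is the star K_{1,n−1} or the complete graph K_n. -/
attribute [local instance] Classical.propDecidable

/-- The spectral radius (largest eigenvalue) of a real symmetric matrix,
as the supremum of its real spectrum. -/
noncomputable def specRad {V : Type*} [Fintype V] [DecidableEq V] (A : Matrix V V ℝ) : ℝ :=
  sSup (spectrum ℝ A)

open Finset SimpleGraph

section Helpers

lemma matrix_mem_spectrum_iff {N : Type*} [Fintype N] [DecidableEq N]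
    (A : Matrix N N ℝ) (μ : ℝ) :
    μ ∈ spectrum ℝ A ↔ ∃ x : N → ℝ, x ≠ 0 ∧ A.mulVec x = μ • x := by
  rw [spectrum.mem_iff, Matrix.isUnit_iff_isUnit_det, isUnit_iff_ne_zero, not_ne_iff,
    ← Matrix.exists_mulVec_eq_zero_iff]
  have key : ∀ v : N → ℝ, (algebraMap ℝ (Matrix N N ℝ) μ - A).mulVec v = μ • v - A.mulVec v := by
    intro v
    rw [Matrix.sub_mulVec]
    congr 1
    rw [Matrix.algebraMap_eq_diagonal]
    ext i
    simp [Matrix.mulVec_diagonal]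
  constructor
  · rintro ⟨x, hx, h⟩
    rw [key, sub_eq_zero] at h
    exact ⟨x, hx, h.symm⟩
  · rintro ⟨x, hx, h⟩
    exact ⟨x, hx, by rw [key, h, sub_self]⟩

lemma specRad_eq_of {N : Type*} [Fintype N] [DecidableEq N] (A : Matrix N N ℝ) {b : ℝ}
    (hb : ∀ μ ∈ spectrum ℝ A, μ ≤ b) (hmem : b ∈ spectrum ℝ A) : specRad A = b :=
  le_antisymm (csSup_le ⟨b, hmem⟩ hb) (le_csSup (Set.Finite.bddAbove (A.finite_spectrum)) hmem)

lemma walk_closed {V : Type*} {G : SimpleGraph V} {K : Set V}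
    (hK : ∀ a b, a ∈ K → G.Adj a b → b ∈ K) {u v : V} (p : G.Walk u v) (hu : u ∈ K) :
    v ∈ K := by
  induction p with
  | nil => exact hu
  | cons h _ ih => exact ih (hK _ _ hu h)

end Helpers

section Graph
variable {n : ℕ} {G : SimpleGraph (Fin n)}

lemma degree_pos_of_connected (hG : G.Connected) (h2 : 2 ≤ n) (v : Fin n) :
    0 < G.degree v := by
  rw [SimpleGraph.degree_pos_iff_exists_adj]
  obtain ⟨u, hu⟩ : ∃ u : Fin n, u ≠ v :=
    Fintype.exists_ne_of_one_lt_card (by rw [Fintype.card_fin]; omega) v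
  obtain ⟨p⟩ := hG.preconnected v u
  cases p with
  | nil => exact absurd rfl hu.symm
  | cons h _ => exact ⟨_, h⟩

lemma rowsum_bound (hd : ∀ u, 0 < G.degree u) (v : Fin n) :
    (∑ w ∈ G.neighborFinset v, G.degree w) + (n - 1) ≤ 2 * G.edgeFinset.card ∧
    ((∑ w ∈ G.neighborFinset v, G.degree w) + (n - 1) = 2 * G.edgeFinset.card ↔
      ∀ u, u ≠ v → ¬ G.Adj v u → G.degree u = 1) := by
  classical
  set R : Finset (Fin n) := univ \ insert v (G.neighborFinset v) with hR
  have hsub : insert v (G.neighborFinset v) ⊆ univ := subset_univ _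
  have hsplit : (∑ u ∈ R, G.degree u) + ∑ u ∈ insert v (G.neighborFinset v), G.degree u
      = ∑ u, G.degree u := Finset.sum_sdiff hsub
  have hins : ∑ u ∈ insert v (G.neighborFinset v), G.degree u
      = G.degree v + ∑ w ∈ G.neighborFinset v, G.degree w :=
    Finset.sum_insert (G.notMem_neighborFinset_self v)
  have hcardins : (insert v (G.neighborFinset v)).card = G.degree v + 1 := by
    rw [Finset.card_insert_of_notMem (G.notMem_neighborFinset_self v)]
    rfl
  have hcardR : R.card = n - (G.degree v + 1) := by
    rw [hR, Finset.card_sdiff_of_subset hsub, hcardins, Finset.card_univ, Fintype.card_fin]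
  have hdeglt : G.degree v < n := by
    simpa using G.degree_lt_card_verts v
  have hRge : R.card ≤ ∑ u ∈ R, G.degree u := by
    calc R.card = ∑ _u ∈ R, 1 := by simp
    _ ≤ ∑ u ∈ R, G.degree u := Finset.sum_le_sum (fun u _ => hd u)
  have h2m : ∑ u, G.degree u = 2 * G.edgeFinset.card :=
    G.sum_degrees_eq_twice_card_edges
  have hmemR : ∀ u, u ∈ R ↔ u ≠ v ∧ ¬ G.Adj v u := by
    intro u; simp [hR, SimpleGraph.mem_neighborFinset]
  have hiff2 : (∑ u ∈ R, G.degree u = R.card) ↔ ∀ u ∈ R, G.degree u = 1 := by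
    constructor
    · intro h u hu
      have := (Finset.sum_eq_sum_iff_of_le (fun i _ => (show 1 ≤ G.degree i from hd i))).mp ?_ u hu
      · omega
      · rw [h]; simp
    · intro h
      rw [Finset.sum_congr rfl h]; simp
  constructor
  · omega
  · rw [show ((∑ w ∈ G.neighborFinset v, G.degree w) + (n - 1) = 2 * G.edgeFinset.card)
        ↔ (∑ u ∈ R, G.degree u = R.card) by omega, hiff2]
    constructor
    · intro h u h1 h2
      exact h u ((hmemR u).mpr ⟨h1, h2⟩)
    · intro h u hu
      obtain ⟨h1, h2⟩ := (hmemR u).mp hu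
      exact h u h1 h2

lemma eig_main (hd : ∀ u, 0 < G.degree u)
    {μ : ℝ} {x : Fin n → ℝ} (he : (G.adjMatrix ℝ).mulVec x = μ • x)
    {M : ℝ} (hMpos : 0 < M) (habs : ∀ u, |x u| ≤ M) (v : Fin n) (hv : x v = M)
    (hrow1 : (∑ w ∈ G.neighborFinset v, G.degree w) + (n - 1) ≤ 2 * G.edgeFinset.card)
    (hrow2 : (∑ w ∈ G.neighborFinset v, G.degree w) + (n - 1) = 2 * G.edgeFinset.card ↔
      ∀ u, u ≠ v → ¬ G.Adj v u → G.degree u = 1) :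
    μ^2 ≤ 2 * (G.edgeFinset.card : ℝ) - n + 1 ∧
    (μ^2 = 2 * (G.edgeFinset.card : ℝ) - n + 1 →
      (∀ w u, G.Adj v w → G.Adj w u → x u = M) ∧
      (∀ u, u ≠ v → ¬ G.Adj v u → G.degree u = 1)) := by
  classical
  set C : ℝ := 2 * (G.edgeFinset.card : ℝ) - n + 1 with hC
  have h1n : 1 ≤ n := Nat.pos_of_ne_zero (by rintro rfl; exact absurd v.2 (by simp))
  have hcardrfl : ∀ w : Fin n, (G.neighborFinset w).card = G.degree w := fun _ => rfl
  have h2 : (G.adjMatrix ℝ).mulVec ((G.adjMatrix ℝ).mulVec x) = (μ^2) • x := by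
    rw [he, Matrix.mulVec_smul, he, smul_smul, sq]
  have h1 : μ^2 * M = ∑ w ∈ G.neighborFinset v, ∑ u ∈ G.neighborFinset w, x u := by
    calc μ^2 * M = ((μ^2) • x) v := by rw [Pi.smul_apply, smul_eq_mul, hv]
    _ = (G.adjMatrix ℝ).mulVec ((G.adjMatrix ℝ).mulVec x) v := by rw [h2]
    _ = ∑ w ∈ G.neighborFinset v, ((G.adjMatrix ℝ).mulVec x) w :=
        G.adjMatrix_mulVec_apply _ _
    _ = ∑ w ∈ G.neighborFinset v, ∑ u ∈ G.neighborFinset w, x u :=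
        Finset.sum_congr rfl (fun w _ => G.adjMatrix_mulVec_apply _ _)
  have hxle : ∀ u : Fin n, x u ≤ M := fun u => (le_abs_self _).trans (habs u)
  have hinner : ∀ w : Fin n, ∑ u ∈ G.neighborFinset w, x u ≤ (G.degree w : ℝ) * M := by
    intro w
    calc ∑ u ∈ G.neighborFinset w, x u ≤ ∑ _u ∈ G.neighborFinset w, M :=
          Finset.sum_le_sum (fun u _ => hxle u)
    _ = (G.degree w : ℝ) * M := by rw [Finset.sum_const, nsmul_eq_mul, hcardrfl]
  have houter : ∑ w ∈ G.neighborFinset v, ∑ u ∈ G.neighborFinset w, x u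
      ≤ (∑ w ∈ G.neighborFinset v, (G.degree w : ℝ)) * M := by
    rw [Finset.sum_mul]
    exact Finset.sum_le_sum fun w _ => hinner w
  have hrowR : (∑ w ∈ G.neighborFinset v, (G.degree w : ℝ)) ≤ C := by
    have hcast : (∑ w ∈ G.neighborFinset v, (G.degree w : ℝ)) + ((n : ℝ) - 1)
        ≤ 2 * (G.edgeFinset.card : ℝ) := by
      have := hrow1
      have hcast2 : ((((∑ w ∈ G.neighborFinset v, G.degree w) + (n - 1)) : ℕ) : ℝ)
          ≤ ((2 * G.edgeFinset.card : ℕ) : ℝ) := Nat.cast_le.mpr this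
      push_cast [Nat.cast_sub h1n] at hcast2
      linarith
    rw [hC]
    linarith
  have hSM : (∑ w ∈ G.neighborFinset v, (G.degree w : ℝ)) * M ≤ C * M :=
    mul_le_mul_of_nonneg_right hrowR hMpos.le
  constructor
  · nlinarith [h1, houter, hSM]
  · intro heq
    have hTC : ∑ w ∈ G.neighborFinset v, ∑ u ∈ G.neighborFinset w, x u = C * M := by
      rw [← h1, heq]
    have hTSM : ∑ w ∈ G.neighborFinset v, ∑ u ∈ G.neighborFinset w, x u
        = (∑ w ∈ G.neighborFinset v, (G.degree w : ℝ)) * M := le_antisymm houter (by linarith)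
    have hSC : (∑ w ∈ G.neighborFinset v, (G.degree w : ℝ)) = C := by
      have : (∑ w ∈ G.neighborFinset v, (G.degree w : ℝ)) * M = C * M := by linarith
      exact mul_right_cancel₀ hMpos.ne' this
    have h3 : ∀ w ∈ G.neighborFinset v,
        ∑ u ∈ G.neighborFinset w, x u = (G.degree w : ℝ) * M := by
      refine (Finset.sum_eq_sum_iff_of_le (fun w _ => hinner w)).mp ?_
      rw [← Finset.sum_mul]; exact hTSM
    constructor
    · intro w u hvw hwu
      have h5 : ∑ u ∈ G.neighborFinset w, x u = ∑ _u ∈ G.neighborFinset w, M := by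
        rw [h3 w (G.mem_neighborFinset v w |>.mpr hvw), Finset.sum_const, nsmul_eq_mul, hcardrfl]
      exact (Finset.sum_eq_sum_iff_of_le (fun u _ => hxle u)).mp h5 u
        ((G.mem_neighborFinset w u).mpr hwu)
    · refine hrow2.mp ?_
      have hcast3 : (∑ w ∈ G.neighborFinset v, (G.degree w : ℝ)) + ((n:ℝ) - 1)
          = 2 * (G.edgeFinset.card : ℝ) := by
        rw [hC] at hSC
        linarith
      have : ((((∑ w ∈ G.neighborFinset v, G.degree w) + (n - 1)) : ℕ) : ℝ)
          = ((2 * G.edgeFinset.card : ℕ) : ℝ) := by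
        push_cast [Nat.cast_sub h1n]
        linarith [hcast3]
      exact_mod_cast this

/-- `c` is the center of a star. -/
def IsStarC (G : SimpleGraph (Fin n)) (c : Fin n) : Prop :=
  (∀ u, u ≠ c → G.Adj c u) ∧ ∀ a b, G.Adj a b → a = c ∨ b = c

lemma deg_one_unique {a : Fin n} (ha : G.degree a = 1) : ∃ z, ∀ y, G.Adj a y ↔ y = z := by
  obtain ⟨z, hz⟩ := Finset.card_eq_one.mp (ha : (G.neighborFinset a).card = 1)
  exact ⟨z, fun y => by rw [← G.mem_neighborFinset, hz, Finset.mem_singleton]⟩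

lemma two_le_degree {a y z : Fin n} (hyz : y ≠ z) (hy : G.Adj a y) (hz : G.Adj a z) :
    2 ≤ G.degree a := by
  have hsub : ({y, z} : Finset (Fin n)) ⊆ G.neighborFinset a := by
    intro t ht
    rw [Finset.mem_insert, Finset.mem_singleton] at ht
    rcases ht with rfl | rfl <;> rw [G.mem_neighborFinset] <;> assumption
  calc 2 = ({y, z} : Finset (Fin n)).card := (Finset.card_pair hyz).symm
  _ ≤ (G.neighborFinset a).card := Finset.card_le_card hsub
  _ = G.degree a := rfl

lemma deg1_conn (hG : G.Connected) (h3 : 3 ≤ n) {a b : Fin n}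
    (ha : G.degree a = 1) (hb : G.degree b = 1) (hab : G.Adj a b) : False := by
  obtain ⟨za, hza⟩ := deg_one_unique ha
  obtain ⟨zb, hzb⟩ := deg_one_unique hb
  have hza' : za = b := ((hza b).mp hab).symm
  have hzb' : zb = a := ((hzb a).mp hab.symm).symm
  have hK : ∀ p q : Fin n, p ∈ ({a, b} : Set (Fin n)) → G.Adj p q → q ∈ ({a, b} : Set (Fin n)) := by
    rintro p q (rfl | rfl) hpq
    · right; rw [← hza']; exact (hza q).mp hpq
    · left; rw [← hzb']; exact (hzb q).mp hpq
  obtain ⟨u, hu⟩ : ∃ u : Fin n, u ∉ ({a, b} : Finset (Fin n)) := by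
    by_contra h
    push_neg at h
    have : (univ : Finset (Fin n)).card ≤ ({a, b} : Finset (Fin n)).card :=
      Finset.card_le_card (fun t _ => h t)
    have h2 : ({a, b} : Finset (Fin n)).card ≤ 2 := Finset.card_insert_le _ _ |>.trans (by simp)
    simp only [Finset.card_univ, Fintype.card_fin] at this
    omega
  have := (hG.preconnected a u).elim (fun p => walk_closed hK p (Or.inl rfl))
  rcases this with rfl | rfl <;> simp at hu

lemma star_or_top (hG : G.Connected) (h2 : 2 ≤ n)
    (S : Set (Fin n)) (v₀ : Fin n) (hv₀ : v₀ ∈ S)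
    (hcl : ∀ v ∈ S, ∀ w u, G.Adj v w → G.Adj w u → u ∈ S)
    (hP : ∀ v ∈ S, ∀ u, u ≠ v → ¬ G.Adj v u → G.degree u = 1) :
    (∃ c, IsStarC G c) ∨ G = ⊤ := by
  have hd : ∀ u, 0 < G.degree u := degree_pos_of_connected hG h2
  by_cases htop : G = ⊤
  · exact Or.inr htop
  left
  obtain ⟨a, b, hab, hnadj⟩ : ∃ a b : Fin n, a ≠ b ∧ ¬ G.Adj a b := by
    by_contra h
    push_neg at h
    apply htop
    ext p q
    simp only [SimpleGraph.top_adj]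
    exact ⟨fun hpq => hpq.ne, fun hpq => h p q hpq⟩
  by_cases hfull : ∀ u, u ≠ v₀ → G.Adj v₀ u
  · by_cases hall1 : ∀ u, u ≠ v₀ → G.degree u = 1
    · refine ⟨v₀, hfull, ?_⟩
      intro p q hpq
      by_contra h
      push_neg at h
      have hdp : G.degree p = 1 := hall1 p h.1
      have : (2 : ℕ) ≤ G.degree p := two_le_degree (Ne.symm h.2) (hfull p h.1).symm hpq
      omega
    · exfalso
      push_neg at hall1
      obtain ⟨a₁, ha₁v, ha₁d⟩ := hall1
      have ha₁2 : 2 ≤ G.degree a₁ := by have := hd a₁; omega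
      obtain ⟨w, hwmem, hwne⟩ : ∃ w ∈ G.neighborFinset a₁, w ≠ v₀ :=
        Finset.exists_mem_ne
          (by rw [show (G.neighborFinset a₁).card = G.degree a₁ from rfl]; omega) v₀
      have hw : G.Adj a₁ w := (G.mem_neighborFinset a₁ w).mp hwmem
      have ha₁S : a₁ ∈ S := hcl v₀ hv₀ w a₁ (hfull w hwne) hw.symm
      have hSall : ∀ u, u ∈ S := by
        intro u
        by_cases hu : u = v₀
        · exact hu ▸ hv₀
        · exact hcl a₁ ha₁S v₀ u (hfull a₁ ha₁v).symm (hfull u hu)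
      have hdb : G.degree b = 1 := hP a (hSall a) b hab.symm hnadj
      have hda : G.degree a = 1 := hP b (hSall b) a hab (fun h => hnadj h.symm)
      have hav : a ≠ v₀ := by
        rintro rfl
        exact hnadj (hfull b hab.symm)
      have hby : G.Adj a v₀ := (hfull a hav).symm
      obtain ⟨z, hz⟩ := deg_one_unique hda
      have hzv : z = v₀ := ((hz v₀).mp hby).symm
      have ha₁a : a₁ ≠ a := by
        intro h; rw [h] at ha₁2; omega
      have hnadj2 : ¬ G.Adj a a₁ := by
        intro h
        have := (hz a₁).mp h
        rw [hzv] at this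
        exact ha₁v this
      have := hP a (hSall a) a₁ ha₁a hnadj2
      omega
  · push_neg at hfull
    obtain ⟨w₀, hw₀v, hw₀n⟩ := hfull
    have hdw₀ : G.degree w₀ = 1 := hP v₀ hv₀ w₀ hw₀v hw₀n
    obtain ⟨z, hz⟩ := deg_one_unique hdw₀
    have hzw : G.Adj w₀ z := (hz z).mpr rfl
    have hzv : z ≠ v₀ := by
      rintro rfl
      exact hw₀n hzw.symm
    have h3 : 3 ≤ n := by
      have hcard : ({v₀, w₀, z} : Finset (Fin n)).card = 3 := by
        rw [Finset.card_insert_of_notMem (by simp [hw₀v.symm, hzv.symm, Ne.symm]),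
          Finset.card_insert_of_notMem (by simp [hzw.ne]), Finset.card_singleton]
      calc 3 = ({v₀, w₀, z} : Finset (Fin n)).card := hcard.symm
      _ ≤ (univ : Finset (Fin n)).card := Finset.card_le_card (subset_univ _)
      _ = n := by simp
    have hvz : G.Adj v₀ z := by
      by_contra hvz
      have hdz : G.degree z = 1 := hP v₀ hv₀ z hzv hvz
      exact deg1_conn hG h3 hdz hdw₀ hzw.symm
    have hw₀S : w₀ ∈ S := hcl v₀ hv₀ z w₀ hvz hzw.symm
    have hall : ∀ u, u ≠ z → G.degree u = 1 := by
      intro u hu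
      by_cases huw : u = w₀
      · exact huw ▸ hdw₀
      · refine hP w₀ hw₀S u huw ?_
        intro h
        exact hu ((hz u).mp h)
    have hstar1 : ∀ u, u ≠ z → G.Adj z u := by
      intro u hu
      obtain ⟨y, hy⟩ := deg_one_unique (hall u hu)
      have hadjy : G.Adj u y := (hy y).mpr rfl
      by_cases hyz : y = z
      · exact (hyz ▸ hadjy).symm
      · exact (deg1_conn hG h3 (hall u hu) (hall y hyz) hadjy).elim
    refine ⟨z, hstar1, ?_⟩
    intro p q hpq
    by_contra h
    push_neg at h
    have h2p : (2:ℕ) ≤ G.degree p := two_le_degree (Ne.symm h.2) (hstar1 p h.1).symm hpq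
    have := hall p h.1
    omega

lemma isStarC_adj {c : Fin n} (hc : IsStarC G c) (a b : Fin n) :
    G.Adj a b ↔ (a = c ∧ ¬ b = c) ∨ (b = c ∧ ¬ a = c) := by
  constructor
  · intro h
    rcases hc.2 a b h with rfl | rfl
    · exact Or.inl ⟨rfl, fun hb => h.ne hb.symm⟩
    · exact Or.inr ⟨rfl, fun ha => h.ne ha⟩
  · rintro (⟨rfl, hb⟩ | ⟨rfl, ha⟩)
    · exact hc.1 b hb
    · exact (hc.1 a ha).symm

lemma isStarC_neighborFinset_center {c : Fin n} (hc : IsStarC G c) :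
    G.neighborFinset c = univ.erase c := by
  ext u
  rw [G.mem_neighborFinset, Finset.mem_erase]
  constructor
  · intro h; exact ⟨h.ne', mem_univ u⟩
  · intro h; exact hc.1 u h.1

lemma isStarC_neighborFinset_leaf {c u : Fin n} (hc : IsStarC G c) (hu : u ≠ c) :
    G.neighborFinset u = {c} := by
  ext y
  rw [G.mem_neighborFinset, Finset.mem_singleton]
  constructor
  · intro h
    rcases hc.2 u y h with rfl | rfl
    · exact absurd rfl hu
    · rfl
  · rintro rfl; exact (hc.1 u hu).symm

lemma isStarC_degree_center {c : Fin n} (hc : IsStarC G c) : G.degree c = n - 1 := by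
  show (G.neighborFinset c).card = n - 1
  rw [isStarC_neighborFinset_center hc, Finset.card_erase_of_mem (mem_univ c)]
  simp

lemma isStarC_degree_leaf {c u : Fin n} (hc : IsStarC G c) (hu : u ≠ c) : G.degree u = 1 := by
  show (G.neighborFinset u).card = 1
  rw [isStarC_neighborFinset_leaf hc hu, Finset.card_singleton]

lemma isStarC_card_edges {c : Fin n} (hc : IsStarC G c) :
    G.edgeFinset.card = n - 1 := by
  have h2m : ∑ v, G.degree v = 2 * G.edgeFinset.card := G.sum_degrees_eq_twice_card_edges
  have hsplit : ∑ v, G.degree v = G.degree c + ∑ v ∈ univ.erase c, G.degree v := by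
    rw [← Finset.sum_erase_add _ _ (mem_univ c)]
    ring
  have hleaf : ∑ v ∈ univ.erase c, G.degree v = n - 1 := by
    rw [Finset.sum_congr rfl (fun u hu => isStarC_degree_leaf hc (Finset.mem_erase.mp hu).1)]
    rw [Finset.sum_const, Finset.card_erase_of_mem (mem_univ c), smul_eq_mul, mul_one]
    simp
  have hcen := isStarC_degree_center hc
  omega

lemma isStarC_iso {c : Fin n} (hc : IsStarC G c) :
    Nonempty (G ≃g completeBipartiteGraph (Fin 1) (Fin (n - 1))) := by
  classical
  have e1 : {x : Fin n // x = c} ≃ Fin 1 :=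
    Fintype.equivFinOfCardEq (by rw [Fintype.card_subtype_eq])
  have e2 : {x : Fin n // ¬ x = c} ≃ Fin (n - 1) :=
    Fintype.equivFinOfCardEq
      (by rw [Fintype.card_subtype_compl, Fintype.card_subtype_eq, Fintype.card_fin])
  let E : Fin n ≃ (Fin 1 ⊕ Fin (n - 1)) :=
    (Equiv.sumCompl (· = c)).symm.trans (Equiv.sumCongr e1 e2)
  have hEl : ∀ a : Fin n, a = c → ∃ i, E a = Sum.inl i := by
    intro a ha
    refine ⟨e1 ⟨a, ha⟩, ?_⟩
    show Sum.map ⇑e1 ⇑e2 ((Equiv.sumCompl (· = c)).symm a) = Sum.inl (e1 ⟨a, ha⟩)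
    rw [Equiv.sumCompl_symm_apply_of_pos (p := fun x => x = c) ha]
    rfl
  have hEr : ∀ a : Fin n, ¬ a = c → ∃ i, E a = Sum.inr i := by
    intro a ha
    refine ⟨e2 ⟨a, ha⟩, ?_⟩
    show Sum.map ⇑e1 ⇑e2 ((Equiv.sumCompl (· = c)).symm a) = Sum.inr (e2 ⟨a, ha⟩)
    rw [Equiv.sumCompl_symm_apply_of_neg (p := fun x => x = c) ha]
    rfl
  refine ⟨⟨E, ?_⟩⟩
  intro a b
  rw [isStarC_adj hc a b]
  by_cases ha : a = c <;> by_cases hb : b = c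
  · obtain ⟨i, hi⟩ := hEl a ha
    obtain ⟨j, hj⟩ := hEl b hb
    rw [hi, hj]
    simp [completeBipartiteGraph, ha, hb]
  · obtain ⟨i, hi⟩ := hEl a ha
    obtain ⟨j, hj⟩ := hEr b hb
    rw [hi, hj]
    simp [completeBipartiteGraph, ha, hb]
  · obtain ⟨i, hi⟩ := hEr a ha
    obtain ⟨j, hj⟩ := hEl b hb
    rw [hi, hj]
    simp [completeBipartiteGraph, ha, hb]
  · obtain ⟨i, hi⟩ := hEr a ha
    obtain ⟨j, hj⟩ := hEr b hb
    rw [hi, hj]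
    simp [completeBipartiteGraph, ha, hb]

lemma iso_isStarC (e : G ≃g completeBipartiteGraph (Fin 1) (Fin (n - 1))) :
    IsStarC G (e.symm (Sum.inl 0)) := by
  set c := e.symm (Sum.inl 0) with hcdef
  have hec : e c = Sum.inl 0 := by
    rw [hcdef]
    exact e.apply_symm_apply _
  have hinl : ∀ a : Fin n, ∀ i : Fin 1, e a = Sum.inl i → a = c := by
    intro a i hi
    have : (i : Fin 1) = 0 := Subsingleton.elim _ _
    rw [this] at hi
    have := congrArg e.symm hi
    rwa [e.symm_apply_apply] at this
  constructor
  · intro u hu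
    have hGadj : G.Adj c u ↔
        (completeBipartiteGraph (Fin 1) (Fin (n-1))).Adj (e c) (e u) := (e.map_rel_iff).symm
    rw [hGadj, hec]
    rcases heu : e u with i | j
    · exact absurd (hinl u i heu) hu
    · simp [completeBipartiteGraph]
  · intro a b hab
    have : (completeBipartiteGraph (Fin 1) (Fin (n-1))).Adj (e a) (e b) := e.map_rel_iff.mpr hab
    rcases hea : e a with i | i <;> rcases heb : e b with j | j <;> rw [hea, heb] at this
    · exact Or.inl (hinl a i hea)
    · exact Or.inl (hinl a i hea)
    · exact Or.inr (hinl b j heb)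
    · simp [completeBipartiteGraph] at this

lemma star_sqrt_mem_spectrum {c : Fin n} (hc : IsStarC G c) (h2 : 2 ≤ n) :
    Real.sqrt ((n : ℝ) - 1) ∈ spectrum ℝ (G.adjMatrix ℝ) := by
  classical
  have hNc := isStarC_neighborFinset_center hc
  have hNl : ∀ u, u ≠ c → G.neighborFinset u = {c} := fun u hu => isStarC_neighborFinset_leaf hc hu
  set s : ℝ := Real.sqrt ((n : ℝ) - 1) with hs
  have hn1 : (0:ℝ) ≤ (n:ℝ) - 1 := by
    have : (2:ℝ) ≤ n := by exact_mod_cast h2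
    linarith
  rw [matrix_mem_spectrum_iff]
  refine ⟨fun u => if u = c then s else 1, ?_, ?_⟩
  · obtain ⟨u, hu⟩ : ∃ u : Fin n, u ≠ c :=
      Fintype.exists_ne_of_one_lt_card (by rw [Fintype.card_fin]; omega) c
    intro h0
    have := congrFun h0 u
    simp [hu] at this
  · funext v
    rw [G.adjMatrix_mulVec_apply, Pi.smul_apply, smul_eq_mul]
    by_cases hv : v = c
    · rw [hv, hNc, if_pos rfl]
      rw [Finset.sum_congr rfl (fun u hu => if_neg (Finset.mem_erase.mp hu).1),
        Finset.sum_const, Finset.card_erase_of_mem (mem_univ c), Finset.card_univ,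
        Fintype.card_fin, nsmul_eq_mul, mul_one]
      rw [hs, Real.mul_self_sqrt hn1, Nat.cast_sub (by omega), Nat.cast_one]
    · rw [hNl v hv, Finset.sum_singleton, if_pos rfl, if_neg hv, mul_one]

lemma complete_neighborFinset (hfull : ∀ a b : Fin n, a ≠ b → G.Adj a b) (v : Fin n) :
    G.neighborFinset v = univ.erase v := by
  ext u
  rw [SimpleGraph.mem_neighborFinset, Finset.mem_erase]
  constructor
  · intro h; exact ⟨h.ne', mem_univ u⟩
  · intro h; exact hfull v u (Ne.symm h.1)

lemma complete_card_mem_spectrum (h1 : 1 ≤ n) (hfull : ∀ a b : Fin n, a ≠ b → G.Adj a b) :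
    ((n : ℝ) - 1) ∈ spectrum ℝ (G.adjMatrix ℝ) := by
  classical
  rw [matrix_mem_spectrum_iff]
  refine ⟨fun _ => 1, ?_, ?_⟩
  · intro h0
    have := congrFun h0 ⟨0, h1⟩
    simp at this
  · funext v
    rw [SimpleGraph.adjMatrix_mulVec_apply, Pi.smul_apply, smul_eq_mul, mul_one]
    rw [complete_neighborFinset hfull, Finset.sum_const,
      Finset.card_erase_of_mem (mem_univ v), Finset.card_univ,
      Fintype.card_fin, nsmul_eq_mul, mul_one, Nat.cast_sub h1, Nat.cast_one]

end Graph

section Main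
variable {n : ℕ} {G : SimpleGraph (Fin n)}

lemma adjMatrix_isHermitian : (G.adjMatrix ℝ).IsHermitian := by
  show Matrix.conjTranspose (G.adjMatrix ℝ) = G.adjMatrix ℝ
  ext i j
  rw [Matrix.conjTranspose_apply, star_trivial]
  exact congrFun (congrFun (SimpleGraph.transpose_adjMatrix (α := ℝ) (G := G)) i) j

lemma eig_normalize {μ : ℝ} {x : Fin n → ℝ} (h1 : 1 ≤ n) (hx : x ≠ 0)
    (he : (G.adjMatrix ℝ).mulVec x = μ • x) :
    ∃ (x' : Fin n → ℝ) (v₀ : Fin n) (M : ℝ), 0 < M ∧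
      (G.adjMatrix ℝ).mulVec x' = μ • x' ∧ x' v₀ = M ∧ ∀ u, |x' u| ≤ M := by
  have hne : (univ : Finset (Fin n)).Nonempty := ⟨⟨0, h1⟩, mem_univ _⟩
  obtain ⟨v₀, -, hmax⟩ := Finset.exists_max_image univ (fun u => |x u|) hne
  set M := |x v₀| with hM
  have habs : ∀ u, |x u| ≤ M := fun u => hmax u (mem_univ u)
  have hMpos : 0 < M := by
    rcases lt_or_eq_of_le (abs_nonneg (x v₀)) with h | h
    · exact h
    · exfalso
      apply hx
      funext u
      have h2 : |x u| ≤ 0 := (habs u).trans (le_of_eq h.symm)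
      exact abs_nonpos_iff.mp h2
  rcases le_or_gt 0 (x v₀) with hs | hs
  · exact ⟨x, v₀, M, hMpos, he, (abs_of_nonneg hs).symm, habs⟩
  · refine ⟨-x, v₀, M, hMpos, ?_, ?_, fun u => by rw [Pi.neg_apply, abs_neg]; exact habs u⟩
    · rw [Matrix.mulVec_neg, he, smul_neg]
    · rw [Pi.neg_apply, hM, abs_of_neg hs]
end Main

/-- For a connected graph `G` with `n` vertices and `m` edges,
`ρ(G) ≤ √(2m − n + 1)`, with equality iff `G` is the star `K_{1,n−1}`
or the complete graph `K_n`. -/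
theorem stmt_7 (n : ℕ) (G : SimpleGraph (Fin n)) (hG : G.Connected) (m : ℕ)
    (hm : m = G.edgeFinset.card) :
    specRad (G.adjMatrix ℝ) ≤ Real.sqrt (2 * m - n + 1) ∧
      (specRad (G.adjMatrix ℝ) = Real.sqrt (2 * m - n + 1) ↔
        Nonempty (G ≃g completeBipartiteGraph (Fin 1) (Fin (n - 1))) ∨ G = ⊤) := by
  classical
  subst hm
  have hnem : Nonempty (Fin n) := hG.nonempty
  have hn1 : 1 ≤ n := by
    have := Fintype.card_pos (α := Fin n)
    simp at this; omega
  rcases eq_or_lt_of_le hn1 with h1 | h2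
  · -- the one-vertex case
    have hn : n = 1 := h1.symm
    subst hn
    have hadjF : ∀ a b : Fin 1, ¬ G.Adj a b := by
      intro a b h
      have hab : a = b := Subsingleton.elim a b
      rw [hab] at h
      exact G.irrefl h
    have htop : G = ⊤ := by
      ext a b
      have hab : a = b := Subsingleton.elim a b
      subst hab
      simp [hadjF]
    have hdeg : ∀ v : Fin 1, G.degree v = 0 := by
      intro v
      show (G.neighborFinset v).card = 0
      rw [Finset.card_eq_zero]
      ext u
      simp only [SimpleGraph.mem_neighborFinset, Finset.notMem_empty, iff_false]
      exact hadjF v u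
    have hm0 : G.edgeFinset.card = 0 := by
      have h2m := G.sum_degrees_eq_twice_card_edges
      rw [Finset.sum_congr rfl (fun v _ => hdeg v), Finset.sum_const_zero] at h2m
      omega
    have hA0 : G.adjMatrix ℝ = 0 := by
      ext i j
      simp [SimpleGraph.adjMatrix_apply, hadjF]
    have hspec : specRad (G.adjMatrix ℝ) = 0 := by
      rw [specRad, hA0, spectrum.zero_eq]
      exact csSup_singleton 0
    have hsval : Real.sqrt (2 * (G.edgeFinset.card : ℝ) - (1:ℕ) + 1) = 0 := by
      rw [hm0]
      norm_num
    refine ⟨?_, ?_, ?_⟩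
    · rw [hspec]
      exact Real.sqrt_nonneg _
    · intro _
      exact Or.inr htop
    · intro _
      rw [hspec, hsval]
  · -- at least two vertices
    have h2n : 2 ≤ n := h2
    have hd : ∀ u, 0 < G.degree u := degree_pos_of_connected hG h2n
    have hn2m : n ≤ 2 * G.edgeFinset.card := by
      obtain ⟨v⟩ := hnem
      have hrow := (rowsum_bound hd v).1
      have hcp : 0 < (G.neighborFinset v).card := hd v
      obtain ⟨w, hw⟩ := Finset.card_pos.mp hcp
      have hs : 1 ≤ ∑ w ∈ G.neighborFinset v, G.degree w := by
        calc 1 ≤ G.degree w := hd w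
        _ ≤ ∑ u ∈ G.neighborFinset v, G.degree u :=
            Finset.single_le_sum (f := fun u => G.degree u) (fun i _ => Nat.zero_le _) hw
      omega
    set C : ℝ := 2 * ((G.edgeFinset.card : ℕ) : ℝ) - n + 1 with hC
    have hC0 : (0:ℝ) ≤ C := by
      rw [hC]
      have : (n:ℝ) ≤ 2*((G.edgeFinset.card : ℕ):ℝ) := by exact_mod_cast hn2m
      linarith
    have part1 : ∀ μ ∈ spectrum ℝ (G.adjMatrix ℝ), μ ≤ Real.sqrt C := by
      intro μ hμ
      obtain ⟨x, hx, he⟩ := (matrix_mem_spectrum_iff _ _).mp hμ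
      obtain ⟨x', v₀, M, hMpos, he', hv', habs'⟩ := eig_normalize hn1 hx he
      have hrow := rowsum_bound hd v₀
      have hle := (eig_main hd he' hMpos habs' v₀ hv' hrow.1 hrow.2).1
      calc μ ≤ |μ| := le_abs_self μ
      _ = Real.sqrt (μ^2) := (Real.sqrt_sq_eq_abs μ).symm
      _ ≤ Real.sqrt C := Real.sqrt_le_sqrt (by rw [hC]; exact hle)
    have hub : specRad (G.adjMatrix ℝ) ≤ Real.sqrt C :=
      Real.sSup_le part1 (Real.sqrt_nonneg _)
    refine ⟨hub, ?_, ?_⟩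
    · intro h
      have hherm : (G.adjMatrix ℝ).IsHermitian := adjMatrix_isHermitian
      have hnsp : (spectrum ℝ (G.adjMatrix ℝ)).Nonempty :=
        ⟨_, hherm.eigenvalues_mem_spectrum_real (Classical.arbitrary (Fin n))⟩
      have hmem : specRad (G.adjMatrix ℝ) ∈ spectrum ℝ (G.adjMatrix ℝ) :=
        Set.Nonempty.csSup_mem hnsp (Matrix.finite_spectrum _)
      have hμ2 : (specRad (G.adjMatrix ℝ))^2 = C := by
        rw [h]
        exact Real.sq_sqrt hC0
      rw [hC] at hμ2
      obtain ⟨x, hx, he⟩ := (matrix_mem_spectrum_iff _ _).mp hmem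
      obtain ⟨x', v₀, M, hMpos, he', hv', habs'⟩ := eig_normalize hn1 hx he
      set S : Set (Fin n) := {u | x' u = M} with hS
      have hv₀S : v₀ ∈ S := hv'
      have hcl : ∀ v ∈ S, ∀ w u, G.Adj v w → G.Adj w u → u ∈ S := by
        intro v hv w u hvw hwu
        have hrow := rowsum_bound hd v
        exact ((eig_main hd he' hMpos habs' v hv hrow.1 hrow.2).2 hμ2).1 w u hvw hwu
      have hP : ∀ v ∈ S, ∀ u, u ≠ v → ¬ G.Adj v u → G.degree u = 1 := by
        intro v hv
        have hrow := rowsum_bound hd v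
        exact ((eig_main hd he' hMpos habs' v hv hrow.1 hrow.2).2 hμ2).2
      rcases star_or_top hG h2n S v₀ hv₀S hcl hP with ⟨c, hc⟩ | htop
      · exact Or.inl (isStarC_iso hc)
      · exact Or.inr htop
    · intro hor
      rcases hor with he | htop
      · obtain ⟨e⟩ := he
        have hc := iso_isStarC e
        have hm' : G.edgeFinset.card = n - 1 := isStarC_card_edges hc
        have hCval : C = (n:ℝ) - 1 := by
          rw [hC, hm', Nat.cast_sub hn1]
          push_cast
          ring
        have hmem := star_sqrt_mem_spectrum hc h2n
        have heq := specRad_eq_of (G.adjMatrix ℝ)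
          (b := Real.sqrt ((n:ℝ) - 1))
          (fun μ hμ => by rw [← hCval]; exact part1 μ hμ) hmem
        rw [heq, hCval]
      · have hfull : ∀ a b : Fin n, a ≠ b → G.Adj a b := by
          intro a b hab
          rw [htop]
          simpa using hab
        have hdeg : ∀ v : Fin n, G.degree v = n - 1 := by
          intro v
          show (G.neighborFinset v).card = n - 1
          rw [complete_neighborFinset hfull, Finset.card_erase_of_mem (mem_univ v)]
          simp
        have h2m : 2 * G.edgeFinset.card = n * (n - 1) := by
          have hsum := G.sum_degrees_eq_twice_card_edges
          rw [Finset.sum_congr rfl (fun v _ => hdeg v), Finset.sum_const, Finset.card_univ,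
            Fintype.card_fin, smul_eq_mul] at hsum
          omega
        have hcastm : 2 * ((G.edgeFinset.card : ℕ) : ℝ) = (n:ℝ) * ((n:ℝ) - 1) := by
          have hcc : ((2 * G.edgeFinset.card : ℕ) : ℝ)
              = ((n * (n - 1) : ℕ) : ℝ) := by exact_mod_cast congrArg (Nat.cast : ℕ → ℝ) h2m
          push_cast [Nat.cast_sub hn1] at hcc
          linarith
        have hCval : C = ((n:ℝ) - 1)^2 := by
          rw [hC, hcastm]
          ring
        have hn1R : (0:ℝ) ≤ (n:ℝ) - 1 := by
          have : (1:ℝ) ≤ n := by exact_mod_cast hn1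
          linarith
        have hsq : Real.sqrt C = (n:ℝ) - 1 := by
          rw [hCval, Real.sqrt_sq hn1R]
        have hmem := complete_card_mem_spectrum hn1 hfull
        have heq := specRad_eq_of (G.adjMatrix ℝ) (b := (n:ℝ) - 1)
          (fun μ hμ => (part1 μ hμ).trans_eq hsq) hmem
        exact heq.trans hsq.symm
end

section
/- The characteristic polynomial of the complete multipartite graph K_{n_1,…,n_k} of order n = n_1 + ⋯ + n_k equals x^{n−k} · (1 − Σ_{i=1}^{k} n_i/(x + n_i)) · Π_{i=1}^{k}(x + n_i). -/
attribute [local instance] Classical.propDecidable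

open Polynomial


section Aux
open Matrix

lemma det_smul_one_add_ones (m : Type*) [Fintype m] [DecidableEq m] (hm : 1 ≤ Fintype.card m)
    (x : ℝ) (hx : x ≠ 0) :
    (x • (1 : Matrix m m ℝ) + Matrix.of (fun _ _ => (1:ℝ))).det
      = x ^ (Fintype.card m - 1) * (x + Fintype.card m) := by
  have h : x • (1 : Matrix m m ℝ) + Matrix.of (fun _ _ => (1:ℝ))
      = x • ((1 : Matrix m m ℝ) + Matrix.replicateCol Unit (fun _ => x⁻¹) * Matrix.replicateRow Unit (fun _ => (1:ℝ))) := by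
    ext i j
    by_cases hij : i = j <;>
      simp [hij, Matrix.one_apply, Matrix.mul_apply, mul_add, mul_inv_cancel₀ hx]
  rw [h]
  rw [Matrix.det_smul]
  have hd := Matrix.det_one_add_replicateCol_mul_replicateRow (m := m) (α := ℝ) (ι := Unit) (fun _ => x⁻¹) (fun _ => (1:ℝ))
  rw [hd]
  have hdot : (fun _ : m => (1:ℝ)) ⬝ᵥ (fun _ : m => x⁻¹) = (Fintype.card m : ℝ) * x⁻¹ := by
    simp [dotProduct, mul_comm]
  rw [hdot]
  obtain ⟨c, hc⟩ : ∃ c, Fintype.card m = c + 1 := ⟨Fintype.card m - 1, by omega⟩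
  rw [hc]
  simp only [Nat.add_sub_cancel]
  push_cast
  field_simp
  ring

def sigmaFiberEquiv' {k : ℕ} (n : Fin k → ℕ) (i : Fin k) :
    {a : Σ j, Fin (n j) // a.1 = i} ≃ Fin (n i) where
  toFun a := a.2 ▸ a.1.2
  invFun b := ⟨⟨i, b⟩, rfl⟩
  left_inv := by rintro ⟨⟨j, b⟩, rfl⟩; rfl
  right_inv := fun b => rfl

end Aux

open Matrix

/-- The characteristic polynomial of the complete multipartite graph `K_{n₁,…,n_k}` of
order `N = n₁ + ⋯ + n_k` equals
`x^{N−k}·(∏ᵢ (x + nᵢ) − Σᵢ nᵢ·∏_{j≠i} (x + n_j))`, which is the expanded form of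
`x^{N−k}·(1 − Σᵢ nᵢ/(x+nᵢ))·∏ᵢ (x + nᵢ)`. -/
theorem stmt_10 (k : ℕ) (n : Fin k → ℕ) (hn : ∀ i, 1 ≤ n i) :
    ((SimpleGraph.completeMultipartiteGraph fun i => Fin (n i)).adjMatrix ℝ).charpoly =
      X ^ ((∑ i, n i) - k) *
        (∏ i, (X + C (n i : ℝ)) -
          ∑ i, C (n i : ℝ) * ∏ j ∈ Finset.univ.erase i, (X + C (n j : ℝ))) := by
  classical
  set V := (i : Fin k) × Fin (n i) with hV
  set A : Matrix V V ℝ :=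
    (SimpleGraph.completeMultipartiteGraph fun i => Fin (n i)).adjMatrix ℝ with hA
  apply Polynomial.eq_of_infinite_eval_eq
  refine Set.Infinite.mono ?_ (Set.Ioi_infinite 0)
  intro x hx
  simp only [Set.mem_setOf_eq]
  have hx0 : (0:ℝ) < x := hx
  have hxne : x ≠ 0 := ne_of_gt hx0
  have hxn : ∀ i, x + (n i : ℝ) ≠ 0 := fun i => by positivity
  -- sums over the sigma type
  have hsum : ∀ g : Fin k → ℝ, (∑ v : V, g v.1) = ∑ j, (n j : ℝ) * g j := by
    intro g
    rw [← Finset.univ_sigma_univ, Finset.sum_sigma]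
    simp [Finset.sum_const, nsmul_eq_mul, mul_comm]
  -- the block-diagonal matrix B and the vector w
  set B : Matrix V V ℝ :=
      x • 1 + Matrix.of (fun a b : V => if a.1 = b.1 then (1:ℝ) else 0) with hB
  set w : V → ℝ := fun a => (x + (n a.1 : ℝ))⁻¹ with hw
  -- evaluation of the charpoly is a determinant
  have hL : eval x A.charpoly = (x • (1 : Matrix V V ℝ) - A).det := by
    rw [Matrix.charpoly, ← Polynomial.coe_evalRingHom, RingHom.map_det]
    congr 1
    ext a b
    by_cases hab : a = b
    · subst hab
      simp [Matrix.charmatrix_apply_eq, Matrix.one_apply]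
    · simp [Matrix.charmatrix_apply_ne _ _ _ hab, Matrix.one_apply, hab]
  -- B *ᵥ w = 1
  have hBw : B *ᵥ w = fun _ => (1:ℝ) := by
    funext v
    obtain ⟨i, a⟩ := v
    have hterm : ∀ u : V, B ⟨i, a⟩ u * w u
        = (if (⟨i, a⟩ : V) = u then x * w u else 0)
          + (if i = u.1 then w u else 0) := by
      intro u
      by_cases h1 : (⟨i, a⟩ : V) = u
      · have h2 : i = u.1 := by rw [← h1]
        simp [hB, Matrix.one_apply, h1, h2, add_mul]
      · by_cases h2 : i = u.1
        · simp [hB, Matrix.one_apply, h1, h2]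
        · simp [hB, Matrix.one_apply, h1, h2]
    have : (B *ᵥ w) ⟨i, a⟩ = ∑ u : V, B ⟨i, a⟩ u * w u := rfl
    rw [this, Finset.sum_congr rfl (fun u _ => hterm u), Finset.sum_add_distrib,
      Finset.sum_ite_eq Finset.univ (⟨i, a⟩ : V) (fun u => x * w u) ]
    have hsecond : (∑ u : V, if i = u.1 then w u else 0)
        = (n i : ℝ) * (x + (n i : ℝ))⁻¹ := by
      have : (∑ u : V, if i = u.1 then w u else 0)
          = ∑ j, (n j : ℝ) * (if i = j then (x + (n j : ℝ))⁻¹ else 0) :=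
        hsum (fun j => if i = j then (x + (n j : ℝ))⁻¹ else 0)
      rw [this]
      simp
    rw [hsecond]
    simp only [Finset.mem_univ, if_true, hw]
    field_simp
  -- factorization
  have hsub : x • (1 : Matrix V V ℝ) - A
      = B * ((1 : Matrix V V ℝ)
          - Matrix.replicateCol Unit w * Matrix.replicateRow Unit (fun _ => (1:ℝ))) := by
    rw [Matrix.mul_sub, Matrix.mul_one, ← Matrix.mul_assoc, ← Matrix.replicateCol_mulVec, hBw]
    ext a b
    by_cases hab : a = b
    · subst hab
      have : ¬ a.1 ≠ a.1 := by simp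
      simp [hA, hB, Matrix.one_apply, Matrix.mul_apply, SimpleGraph.adjMatrix]
    · by_cases h1 : a.1 = b.1
      · simp [hA, hB, Matrix.one_apply, Matrix.mul_apply, hab, h1,
          SimpleGraph.adjMatrix]
      · simp [hA, hB, Matrix.one_apply, Matrix.mul_apply, hab, h1,
          SimpleGraph.adjMatrix]
  -- determinant of rank-one factor
  have h2 : ((1 : Matrix V V ℝ)
        - Matrix.replicateCol Unit w * Matrix.replicateRow Unit (fun _ => (1:ℝ))).det
      = 1 - ∑ j, (n j : ℝ) * (x + (n j : ℝ))⁻¹ := by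
    have hcol : (1 : Matrix V V ℝ) - Matrix.replicateCol Unit w * Matrix.replicateRow Unit (fun _ => (1:ℝ))
        = 1 + Matrix.replicateCol Unit (-w) * Matrix.replicateRow Unit (fun _ => (1:ℝ)) := by
      ext a b
      simp [Matrix.mul_apply, sub_eq_add_neg]
    rw [hcol]
    have hd := Matrix.det_one_add_replicateCol_mul_replicateRow (m := V) (α := ℝ) (ι := Unit) (-w) (fun _ => (1:ℝ))
    rw [hd]
    have : (fun _ : V => (1:ℝ)) ⬝ᵥ (-w) = -∑ v : V, w v := by
      simp [dotProduct]
    rw [this, hsum (fun j => (x + (n j : ℝ))⁻¹)]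
    ring
  -- B is block triangular
  have hBT : B.BlockTriangular Sigma.fst := by
    intro u v hlt
    have h1 : u.1 ≠ v.1 := ne_of_gt hlt
    have h2 : u ≠ v := fun h => h1 (by rw [h])
    simp [hB, Matrix.one_apply, h1, h2]
  -- card of fibers
  have hcard : ∀ i : Fin k, Fintype.card {a : V // a.1 = i} = n i := by
    intro i
    rw [Fintype.card_congr (sigmaFiberEquiv' n i), Fintype.card_fin]
  -- det B
  have hdetB : B.det = ∏ i, x ^ (n i - 1) * (x + (n i : ℝ)) := by
    rw [Matrix.BlockTriangular.det_fintype hBT]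
    refine Finset.prod_congr rfl fun i _ => ?_
    have hts : B.toSquareBlock Sigma.fst i
        = x • (1 : Matrix {a : V // a.1 = i} {a : V // a.1 = i} ℝ)
          + Matrix.of (fun _ _ => (1:ℝ)) := by
      ext a b
      have h1 : a.val.1 = b.val.1 := a.prop.trans b.prop.symm
      have h2 : (a.val = b.val) ↔ (a = b) := Subtype.ext_iff.symm
      simp [Matrix.toSquareBlock_def, hB, Matrix.one_apply, h1, h2]
    rw [hts, det_smul_one_add_ones _ (by rw [hcard i]; exact hn i) x hxne, hcard i]
  -- evaluate RHS
  have hR : eval x (X ^ ((∑ i, n i) - k) *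
        (∏ i, (X + C (n i : ℝ)) -
          ∑ i, C (n i : ℝ) * ∏ j ∈ Finset.univ.erase i, (X + C (n j : ℝ))))
      = x ^ ((∑ i, n i) - k) *
        ((∏ i, (x + (n i : ℝ))) -
          ∑ i, (n i : ℝ) * ∏ j ∈ Finset.univ.erase i, (x + (n j : ℝ))) := by
    simp [eval_prod, eval_finset_sum]
  -- exponent arithmetic
  have hexp : (∑ i, (n i - 1)) = (∑ i, n i) - k := by
    have h1 : (∑ i, n i) = ∑ i, ((n i - 1) + 1) :=
      Finset.sum_congr rfl fun i _ => by have := hn i; omega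
    have h2 : (∑ i, ((n i - 1) + 1)) = (∑ i, (n i - 1)) + k := by
      rw [Finset.sum_add_distrib, Finset.sum_const, Finset.card_univ, Fintype.card_fin,
        smul_eq_mul, mul_one]
    omega
  -- put it together
  rw [hL, hsub, Matrix.det_mul, h2, hdetB, hR, Finset.prod_mul_distrib,
    Finset.prod_pow_eq_pow_sum, hexp]
  rw [mul_assoc]
  congr 1
  rw [mul_sub, mul_one, Finset.mul_sum]
  congr 1
  refine Finset.sum_congr rfl fun i _ => ?_
  rw [← Finset.mul_prod_erase Finset.univ _ (Finset.mem_univ i)]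
  field_simp
end

section
/- Let G be a connected graph, v₁, v₂ two vertices of G, and u₁,…,u_t vertices in N(v₁)∖(N(v₂)∪{v₂}). Let G' be the graph obtained from G by replacing each edge v₁uᵢ with the edge v₂uᵢ (i = 1,…,t, t ≥ 1). If x is the Perron eigenvector of G and x_{v₁} ≤ x_{v₂}, then ρ(G') > ρ(G). -/
attribute [local instance] Classical.propDecidable

open Matrix

lemma rayleigh_aux {V : Type*} [Fintype V] [DecidableEq V] [Nonempty V]
    {A : Matrix V V ℝ} (hA : A.IsHermitian) (y : V → ℝ) (hy : ∑ v, y v ^ 2 = 1) :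
    ∑ v, y v * (A *ᵥ y) v ≤ specRad A ∧
      (∑ v, y v * (A *ᵥ y) v = specRad A → A *ᵥ y = specRad A • y) := by
  classical
  set μ := hA.eigenvalues with hμ
  have hspec : spectrum ℝ A = Set.range μ := hA.spectrum_real_eq_range_eigenvalues
  have hne : (Set.range μ).Nonempty := Set.range_nonempty _
  have hfin : (Set.range μ).Finite := Set.finite_range _
  have hmem : specRad A ∈ Set.range μ := by
    rw [specRad, hspec]; exact hne.csSup_mem hfin
  have hle : ∀ i, μ i ≤ specRad A := fun i => by
    rw [specRad, hspec]; exact le_csSup hfin.bddAbove ⟨i, rfl⟩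
  set B := hA.eigenvectorBasis with hB
  set y' : EuclideanSpace ℝ V := (WithLp.equiv 2 (V → ℝ)).symm y with hy'
  set w' : EuclideanSpace ℝ V := (WithLp.equiv 2 (V → ℝ)).symm (A *ᵥ y) with hw'
  set c : V → ℝ := fun i => inner ℝ (B i) y' with hc
  have hAsymm : ∀ v w, A v w = A w v := fun v w => by
    have h2 : A w v = A v w := by
      simpa [Matrix.conjTranspose_apply] using congrFun (congrFun hA v) w
    exact h2.symm
  have hcip : ∀ i, c i = ∑ v, B i v * y v := by
    intro i
    simp [hc, PiLp.inner_apply, RCLike.inner_apply, y']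
    exact Finset.sum_congr rfl fun _ _ => mul_comm _ _
  have hmul : ∀ i, A *ᵥ (B i : V → ℝ) = μ i • (B i : V → ℝ) := fun i =>
    hA.mulVec_eigenvectorBasis i
  have hBw : ∀ i, (inner ℝ (B i) w' : ℝ) = μ i * c i := by
    intro i
    have expand : (inner ℝ (B i) w' : ℝ) = ∑ v, B i v * (A *ᵥ y) v := by
      simp [PiLp.inner_apply, RCLike.inner_apply, w']
      exact Finset.sum_congr rfl fun _ _ => mul_comm _ _
    rw [expand]
    have swap : ∑ v, B i v * (A *ᵥ y) v = ∑ w, (A *ᵥ (B i : V → ℝ)) w * y w := by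
      simp only [Matrix.mulVec, dotProduct, Finset.mul_sum, Finset.sum_mul]
      rw [Finset.sum_comm]
      apply Finset.sum_congr rfl
      intro w _
      apply Finset.sum_congr rfl
      intro v _
      rw [hAsymm v w]; ring
    rw [swap]
    rw [hcip i, Finset.mul_sum]
    apply Finset.sum_congr rfl
    intro v _
    rw [hmul i]
    show (μ i * B i v) * y v = μ i * (B i v * y v)
    ring
  have hyw : (inner ℝ y' w' : ℝ) = ∑ v, y v * (A *ᵥ y) v := by
    simp [PiLp.inner_apply, RCLike.inner_apply, y', w']
    exact Finset.sum_congr rfl fun _ _ => mul_comm _ _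
  have hkey : ∑ v, y v * (A *ᵥ y) v = ∑ i, μ i * c i ^ 2 := by
    have := B.sum_inner_mul_inner y' w'
    rw [hyw] at this
    rw [← this]
    apply Finset.sum_congr rfl
    intro i _
    rw [real_inner_comm (B i) y', hBw i]
    show (c i) * (μ i * c i) = μ i * c i ^ 2
    ring
  have hcsum : ∑ i, c i ^ 2 = 1 := by
    have := B.sum_inner_mul_inner y' y'
    have h2 : (inner ℝ y' y' : ℝ) = 1 := by
      simp only [PiLp.inner_apply, RCLike.inner_apply, conj_trivial, y',
        WithLp.equiv_symm_apply, PiLp.toLp_apply]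
      rw [← hy]; apply Finset.sum_congr rfl; intro v _; ring
    rw [h2] at this
    rw [← this]
    apply Finset.sum_congr rfl
    intro i _
    rw [real_inner_comm (B i) y']
    show c i ^ 2 = c i * c i
    ring
  constructor
  · rw [hkey]
    calc ∑ i, μ i * c i ^ 2 ≤ ∑ i, specRad A * c i ^ 2 := by
          apply Finset.sum_le_sum
          intro i _
          exact mul_le_mul_of_nonneg_right (hle i) (sq_nonneg _)
      _ = specRad A := by rw [← Finset.mul_sum, hcsum, mul_one]
  · intro heq
    have hz : ∑ i, (specRad A - μ i) * c i ^ 2 = 0 := by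
      have : ∑ i, specRad A * c i ^ 2 = specRad A := by
        rw [← Finset.mul_sum, hcsum, mul_one]
      rw [hkey] at heq
      simp only [sub_mul]
      rw [Finset.sum_sub_distrib, this, heq, sub_self]
    have hterm : ∀ i ∈ Finset.univ, (specRad A - μ i) * c i ^ 2 = 0 := by
      rw [← Finset.sum_eq_zero_iff_of_nonneg]
      · exact hz
      · intro i _
        exact mul_nonneg (by linarith [hle i]) (sq_nonneg _)
    have hmc : ∀ i, μ i * c i = specRad A * c i := by
      intro i
      rcases mul_eq_zero.1 (hterm i (Finset.mem_univ i)) with h | h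
      · rw [show μ i = specRad A by linarith [h]]
      · rw [pow_eq_zero_iff (by norm_num)] at h
        rw [h, mul_zero, mul_zero]
    -- now conclude w' = specRad A • y'
    have hEq : w' = specRad A • y' := by
      apply B.repr.injective
      ext i
      rw [B.repr_apply_apply, B.repr_apply_apply]
      rw [hBw i, hmc i, inner_smul_right]
    funext v
    have := congrArg (fun z => (WithLp.equiv 2 (V → ℝ)) z v) hEq
    simpa [w', y'] using this

lemma helper_sum_one {V : Type*} [Fintype V] [DecidableEq V] {t : ℕ} (u : Fin t → V)
    (hu : Function.Injective u) (a v w : V) (ha : ∀ i, u i ≠ a) (j : Fin t)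
    (hj : (v = a ∧ w = u j) ∨ (v = u j ∧ w = a)) :
    ∑ i, (if (v = a ∧ w = u i) ∨ (v = u i ∧ w = a) then (1:ℝ) else 0) = 1 := by
  rw [Finset.sum_eq_single j]
  · rw [if_pos hj]
  · intro i _ hij
    rw [if_neg]
    rintro (⟨h3, h4⟩ | ⟨h3, h4⟩) <;> rcases hj with ⟨h1, h2⟩ | ⟨h1, h2⟩
    · exact hij (hu (h4.symm.trans h2))
    · exact ha j (h1.symm.trans h3)
    · exact ha j (h2.symm.trans h4)
    · exact hij (hu (h3.symm.trans h1))
  · intro h; exact absurd (Finset.mem_univ j) h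

lemma helper_sum_zero {V : Type*} [Fintype V] [DecidableEq V] {t : ℕ} (u : Fin t → V)
    (a v w : V) (h : ¬ ∃ i, (v = a ∧ w = u i) ∨ (v = u i ∧ w = a)) :
    ∑ i, (if (v = a ∧ w = u i) ∨ (v = u i ∧ w = a) then (1:ℝ) else 0) = 0 :=
  Finset.sum_eq_zero fun i _ => if_neg (fun hc => h ⟨i, hc⟩)

lemma helper_pair_sum {V : Type*} [Fintype V] [DecidableEq V] (x : V → ℝ) (a c : V)
    (h : a ≠ c) :
    ∑ v, ∑ w, (if (v = a ∧ w = c) ∨ (v = c ∧ w = a) then (1:ℝ) else 0) * (x v * x w)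
      = 2 * x a * x c := by
  have hsplit : ∀ v w : V, (if (v = a ∧ w = c) ∨ (v = c ∧ w = a) then (1:ℝ) else 0)
      = (if v = a ∧ w = c then (1:ℝ) else 0) + (if v = c ∧ w = a then 1 else 0) := by
    intro v w
    by_cases h1 : v = a ∧ w = c <;> by_cases h2 : v = c ∧ w = a
    · exact absurd (h1.1.symm.trans h2.1) h
    · simp [h1, h2]
      exact fun h' => absurd h' h
    · simp [h1, h2]
      exact fun h' => absurd h'.symm h
    · simp [h1, h2]
  simp_rw [hsplit, add_mul, Finset.sum_add_distrib]
  have e1 : ∀ p q : V, ∑ v, ∑ w, (if v = p ∧ w = q then (1:ℝ) else 0) * (x v * x w)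
      = x p * x q := by
    intro p q
    simp [ite_and, Finset.sum_ite_eq, Finset.mul_sum]
  rw [e1, e1]
  ring

/-- Rotation lemma: let `G` be connected, `u 1, …, u t` distinct vertices of
`N(v₁) \ (N(v₂) ∪ {v₂})`, and let `G'` be obtained from `G` by replacing each edge
`v₁ (u i)` with `v₂ (u i)`. If `x` is the Perron eigenvector of `G` and
`x v₁ ≤ x v₂`, then `ρ(G') > ρ(G)`. -/
theorem stmt_13 {V : Type*} [Fintype V] [DecidableEq V] (G : SimpleGraph V)
    (hG : G.Connected) (v₁ v₂ : V) (t : ℕ) (ht : 1 ≤ t) (u : Fin t → V)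
    (hu : Function.Injective u)
    (hu₁ : ∀ i, G.Adj v₁ (u i)) (hu₂ : ∀ i, ¬ G.Adj v₂ (u i)) (hu₃ : ∀ i, u i ≠ v₂)
    (G' : SimpleGraph V)
    (hG' : G' = (G.deleteEdges {e | ∃ i, e = Sym2.mk v₁ (u i)}) ⊔
        SimpleGraph.fromEdgeSet {e | ∃ i, e = Sym2.mk v₂ (u i)})
    (x : V → ℝ) (hxpos : ∀ v, 0 < x v) (hxunit : ∑ v, x v ^ 2 = 1)
    (hxeig : G.adjMatrix ℝ *ᵥ x = specRad (G.adjMatrix ℝ) • x)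
    (hx12 : x v₁ ≤ x v₂) :
    specRad (G.adjMatrix ℝ) < specRad (G'.adjMatrix ℝ) := by
  classical
  have hV : Nonempty V := ⟨v₁⟩
  set A := G.adjMatrix ℝ with hAdef
  set A' := G'.adjMatrix ℝ with hA'def
  set ρ := specRad A with hρdef
  have i₀ : Fin t := ⟨0, ht⟩
  have hv12 : v₁ ≠ v₂ := by
    intro h; exact hu₂ i₀ (h ▸ hu₁ i₀)
  have huv₁ : ∀ i, u i ≠ v₁ := fun i => (hu₁ i).ne'
  have hA : A.IsHermitian := by
    unfold Matrix.IsHermitian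
    ext v w
    simp [hAdef, Matrix.conjTranspose_apply, SimpleGraph.adj_comm]
  have hA' : A'.IsHermitian := by
    unfold Matrix.IsHermitian
    ext v w
    simp [hA'def, Matrix.conjTranspose_apply, SimpleGraph.adj_comm]
  -- characterization of G'.Adj
  have hG'adj : ∀ v w, G'.Adj v w ↔
      (G.Adj v w ∧ ¬ ∃ i, (v = v₁ ∧ w = u i) ∨ (v = u i ∧ w = v₁)) ∨
      ((∃ i, (v = v₂ ∧ w = u i) ∨ (v = u i ∧ w = v₂)) ∧ v ≠ w) := by
    intro v w
    rw [hG']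
    simp only [SimpleGraph.sup_adj, SimpleGraph.deleteEdges_adj,
      SimpleGraph.fromEdgeSet_adj, Set.mem_setOf_eq, Sym2.eq_iff]
  -- entrywise difference formula
  have hdiff : ∀ v w, A' v w = A v w
      + ∑ i, ((if (v = v₂ ∧ w = u i) ∨ (v = u i ∧ w = v₂) then (1:ℝ) else 0)
            - (if (v = v₁ ∧ w = u i) ∨ (v = u i ∧ w = v₁) then (1:ℝ) else 0)) := by
    intro v w
    rw [Finset.sum_sub_distrib]
    by_cases hp₁ : ∃ i, (v = v₁ ∧ w = u i) ∨ (v = u i ∧ w = v₁)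
    · obtain ⟨j, hj⟩ := hp₁
      have hadj : G.Adj v w := by
        rcases hj with ⟨h1, h2⟩ | ⟨h1, h2⟩
        · rw [h1, h2]; exact hu₁ j
        · rw [h1, h2]; exact (hu₁ j).symm
      have hnp₂ : ¬ ∃ i, (v = v₂ ∧ w = u i) ∨ (v = u i ∧ w = v₂) := by
        rintro ⟨i, (⟨h3, h4⟩ | ⟨h3, h4⟩)⟩ <;> rcases hj with ⟨h1, h2⟩ | ⟨h1, h2⟩
        · exact hv12 (h1.symm.trans h3)
        · exact hu₃ j (h1.symm.trans h3)
        · exact hu₃ j (h2.symm.trans h4)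
        · exact hv12 (h2.symm.trans h4)
      have hnadj' : ¬ G'.Adj v w := by
        rw [hG'adj]
        rintro (⟨_, hc⟩ | ⟨hc, _⟩)
        · exact hc ⟨j, hj⟩
        · exact hnp₂ hc
      simp only [hA'def, hAdef, SimpleGraph.adjMatrix_apply]
      rw [if_pos hadj, if_neg hnadj',
        helper_sum_one u hu v₁ v w huv₁ j hj, helper_sum_zero u v₂ v w hnp₂]
      ring
    · by_cases hp₂ : ∃ i, (v = v₂ ∧ w = u i) ∨ (v = u i ∧ w = v₂)
      · obtain ⟨j, hj⟩ := hp₂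
        have hnadj : ¬ G.Adj v w := by
          rcases hj with ⟨h1, h2⟩ | ⟨h1, h2⟩
          · rw [h1, h2]; exact hu₂ j
          · rw [h1, h2]; exact fun h => hu₂ j h.symm
        have hvw : v ≠ w := by
          rcases hj with ⟨h1, h2⟩ | ⟨h1, h2⟩
          · rw [h1, h2]; exact fun h => hu₃ j h.symm
          · rw [h1, h2]; exact hu₃ j
        have hadj' : G'.Adj v w := by
          rw [hG'adj]; exact Or.inr ⟨⟨j, hj⟩, hvw⟩
        simp only [hA'def, hAdef, SimpleGraph.adjMatrix_apply]
        rw [if_pos hadj', if_neg hnadj,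
          helper_sum_one u hu v₂ v w hu₃ j hj, helper_sum_zero u v₁ v w hp₁]
        ring
      · have : G'.Adj v w ↔ G.Adj v w := by
          rw [hG'adj]
          constructor
          · rintro (⟨h1, _⟩ | ⟨hc, _⟩)
            · exact h1
            · exact absurd hc hp₂
          · intro h1; exact Or.inl ⟨h1, hp₁⟩
        simp only [hA'def, hAdef, SimpleGraph.adjMatrix_apply]
        rw [helper_sum_zero u v₂ v w hp₂, helper_sum_zero u v₁ v w hp₁]
        simp [this]
  -- sum of x over u
  have hupos : 0 < ∑ i, x (u i) := by
    apply Finset.sum_pos (fun i _ => hxpos _)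
    have : Nonempty (Fin t) := ⟨i₀⟩
    exact Finset.univ_nonempty
  -- Rayleigh quotient of x for A equals ρ
  have hS : ∑ v, x v * (A *ᵥ x) v = ρ := by
    rw [hxeig]
    have : ∀ v, x v * (ρ • x) v = ρ * x v ^ 2 := by
      intro v; simp [Pi.smul_apply, smul_eq_mul]; ring
    simp_rw [this]
    rw [← Finset.mul_sum, hxunit, mul_one]
  -- Rayleigh quotient of x for A'
  have hS' : ∑ v, x v * (A' *ᵥ x) v = ρ + 2 * (x v₂ - x v₁) * ∑ i, x (u i) := by
    have expand : ∑ v, x v * (A' *ᵥ x) v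
        = ∑ v, ∑ w, A' v w * (x v * x w) := by
      simp only [Matrix.mulVec, dotProduct, Finset.mul_sum]
      apply Finset.sum_congr rfl; intro v _
      apply Finset.sum_congr rfl; intro w _
      ring
    rw [expand]
    simp_rw [hdiff, add_mul, Finset.sum_add_distrib]
    have base : ∑ v, ∑ w, A v w * (x v * x w) = ρ := by
      rw [← hS]
      simp only [Matrix.mulVec, dotProduct, Finset.mul_sum]
      apply Finset.sum_congr rfl; intro v _
      apply Finset.sum_congr rfl; intro w _
      ring
    rw [base]
    congr 1
    have swap : ∑ v, ∑ w, (∑ i, ((if (v = v₂ ∧ w = u i) ∨ (v = u i ∧ w = v₂) then (1:ℝ) else 0)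
            - (if (v = v₁ ∧ w = u i) ∨ (v = u i ∧ w = v₁) then (1:ℝ) else 0))) * (x v * x w)
        = ∑ i, (∑ v, ∑ w, (if (v = v₂ ∧ w = u i) ∨ (v = u i ∧ w = v₂) then (1:ℝ) else 0) * (x v * x w)
              - ∑ v, ∑ w, (if (v = v₁ ∧ w = u i) ∨ (v = u i ∧ w = v₁) then (1:ℝ) else 0) * (x v * x w)) := by
      simp_rw [Finset.sum_mul, sub_mul, Finset.sum_sub_distrib]
      congr 1
      · have h1 : ∀ v : V, ∑ w : V, ∑ i : Fin t,
            (if (v = v₂ ∧ w = u i) ∨ (v = u i ∧ w = v₂) then (1:ℝ) else 0) * (x v * x w)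
            = ∑ i : Fin t, ∑ w : V,
            (if (v = v₂ ∧ w = u i) ∨ (v = u i ∧ w = v₂) then (1:ℝ) else 0) * (x v * x w) :=
          fun v => Finset.sum_comm
        simp_rw [h1]
        exact Finset.sum_comm
      · have h1 : ∀ v : V, ∑ w : V, ∑ i : Fin t,
            (if (v = v₁ ∧ w = u i) ∨ (v = u i ∧ w = v₁) then (1:ℝ) else 0) * (x v * x w)
            = ∑ i : Fin t, ∑ w : V,
            (if (v = v₁ ∧ w = u i) ∨ (v = u i ∧ w = v₁) then (1:ℝ) else 0) * (x v * x w) :=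
          fun v => Finset.sum_comm
        simp_rw [h1]
        exact Finset.sum_comm
    rw [swap]
    have term : ∀ i : Fin t,
        (∑ v, ∑ w, (if (v = v₂ ∧ w = u i) ∨ (v = u i ∧ w = v₂) then (1:ℝ) else 0) * (x v * x w)
              - ∑ v, ∑ w, (if (v = v₁ ∧ w = u i) ∨ (v = u i ∧ w = v₁) then (1:ℝ) else 0) * (x v * x w))
        = 2 * (x v₂ - x v₁) * x (u i) := by
      intro i
      rw [helper_pair_sum x v₂ (u i) (fun h => hu₃ i h.symm),
        helper_pair_sum x v₁ (u i) (fun h => huv₁ i h.symm)]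
      ring
    simp_rw [term]
    rw [← Finset.mul_sum]
  -- main chain
  have hray := rayleigh_aux hA' x hxunit
  by_contra hcon
  push_neg at hcon
  -- then specRad A' = ρ and equality holds
  have hge : ρ ≤ ∑ v, x v * (A' *ᵥ x) v := by
    rw [hS']
    nlinarith [hupos, sub_nonneg.2 hx12]
  have heq : ∑ v, x v * (A' *ᵥ x) v = specRad A' := le_antisymm hray.1 (le_trans hcon hge)
  have heig' := hray.2 heq
  have hρ' : specRad A' = ρ := le_antisymm hcon (le_trans hge hray.1)
  -- evaluate eigen equation at v₁
  have hz : ∀ w (i : Fin t), (if (v₁ = v₂ ∧ w = u i) ∨ (v₁ = u i ∧ w = v₂) then (1:ℝ) else 0) = 0 := by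
    intro w i
    rw [if_neg]
    rintro (⟨h1, _⟩ | ⟨h1, _⟩)
    · exact hv12 h1
    · exact huv₁ i h1.symm
  have ho : ∀ w (i : Fin t), (if (v₁ = v₁ ∧ w = u i) ∨ (v₁ = u i ∧ w = v₁) then (1:ℝ) else 0)
      = if w = u i then 1 else 0 := by
    intro w i
    by_cases hw : w = u i
    · rw [if_pos (Or.inl ⟨rfl, hw⟩), if_pos hw]
    · rw [if_neg, if_neg hw]
      rintro (⟨_, h2⟩ | ⟨h1, _⟩)
      · exact hw h2
      · exact huv₁ i h1.symm
  have hrow : ∀ w, A' v₁ w = A v₁ w - ∑ i, (if w = u i then (1:ℝ) else 0) := by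
    intro w
    rw [hdiff v₁ w]
    have hterm : ∀ i : Fin t,
        ((if (v₁ = v₂ ∧ w = u i) ∨ (v₁ = u i ∧ w = v₂) then (1:ℝ) else 0)
          - (if (v₁ = v₁ ∧ w = u i) ∨ (v₁ = u i ∧ w = v₁) then (1:ℝ) else 0))
        = -(if w = u i then (1:ℝ) else 0) := by
      intro i; rw [hz w i, ho w i]; ring
    rw [Finset.sum_congr rfl (fun i _ => hterm i), Finset.sum_neg_distrib]
    ring
  have hv₁ : (A' *ᵥ x) v₁ = (A *ᵥ x) v₁ - ∑ i, x (u i) := by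
    simp only [Matrix.mulVec, dotProduct]
    simp_rw [hrow, sub_mul, Finset.sum_sub_distrib, Finset.sum_mul]
    congr 1
    rw [Finset.sum_comm]
    apply Finset.sum_congr rfl; intro i _
    rw [Finset.sum_eq_single (u i)]
    · simp
    · intro w _ hwi; simp [hwi]
    · intro h; exact absurd (Finset.mem_univ _) h
  have e1 : (A *ᵥ x) v₁ = ρ * x v₁ := by
    rw [hxeig]; simp [Pi.smul_apply, smul_eq_mul]
  have e2 : (A' *ᵥ x) v₁ = ρ * x v₁ := by
    rw [heig', hρ']; simp [Pi.smul_apply, smul_eq_mul]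
  rw [e2, e1] at hv₁
  have : ∑ i, x (u i) = 0 := by linarith
  linarith
end

section
/- The spectral radius of the Turán graph T(n,r) equals (1/2)(n − 2⌊n/r⌋ − 1 + √((n+1)² − 4(n − r⌊n/r⌋)⌈n/r⌉)), and this is at most n − ⌊n/r⌋, with equality if and only if r divides n (i.e., T(n,r) is regular). -/
attribute [local instance] Classical.propDecidable

open Finset

attribute [local instance] Classical.propDecidable

open Finset

lemma card_residue_aux (n r i m : ℕ) (hr : 0 < r) (hi : i < r)
    (h1 : ∀ k, k < m → i + r * k < n) (h2 : ∀ v, v < n → v % r = i → v / r < m) :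
    #{v ∈ Finset.range n | v % r = i} = m := by
  have himg : {v ∈ Finset.range n | v % r = i} = (Finset.range m).image (fun k => i + r * k) := by
    ext v
    simp only [Finset.mem_filter, Finset.mem_range, Finset.mem_image]
    constructor
    · rintro ⟨hv, hmod⟩
      refine ⟨v / r, h2 v hv hmod, ?_⟩
      conv_rhs => rw [← Nat.div_add_mod v r, hmod]
      ring
    · rintro ⟨k, hk, rfl⟩
      exact ⟨h1 k hk, by rw [Nat.add_mul_mod_self_left, Nat.mod_eq_of_lt hi]⟩
  rw [himg, Finset.card_image_of_injective _ (fun a b hab =>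
    Nat.eq_of_mul_eq_mul_left hr (by omega)), Finset.card_range]

lemma card_residue (n r i : ℕ) (hr : 0 < r) (hi : i < r) :
    #{v ∈ Finset.range n | v % r = i} = n / r + if i < n % r then 1 else 0 := by
  have hsr : n % r < r := Nat.mod_lt _ hr
  have hn : r * (n / r) + n % r = n := Nat.div_add_mod n r
  by_cases hcase : i < n % r
  · simp only [hcase, if_true]
    apply card_residue_aux n r i _ hr hi
    · intro k hk
      have hk' : k ≤ n / r := by omega
      have : r * k ≤ r * (n / r) := Nat.mul_le_mul_left r hk'
      omega
    · intro v hv hmod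
      have hva : r * (v / r) + i = v := by
        conv_rhs => rw [← Nat.div_add_mod v r, hmod]
      have hexp : r * (n / r + 1) = r * (n / r) + r := by ring
      have : r * (v / r) < r * (n / r + 1) := by omega
      have := Nat.lt_of_mul_lt_mul_left this
      omega
  · simp only [hcase, if_false, Nat.add_zero]
    apply card_residue_aux n r i _ hr hi
    · intro k hk
      have : r * (k + 1) ≤ r * (n / r) := Nat.mul_le_mul_left r hk
      have hexp : r * (k + 1) = r * k + r := by ring
      omega
    · intro v hv hmod
      have hva : r * (v / r) + i = v := by
        conv_rhs => rw [← Nat.div_add_mod v r, hmod]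
      have : r * (v / r) < r * (n / r) := by omega
      exact Nat.lt_of_mul_lt_mul_left this

lemma card_residue_fin (n r i : ℕ) :
    #{v : Fin n | (v : ℕ) % r = i} = #{v ∈ Finset.range n | v % r = i} := by
  apply Finset.card_bij (fun (v : Fin n) _ => (v : ℕ))
  · intro a ha
    simp only [Finset.mem_filter, Finset.mem_univ, true_and] at ha
    simp [a.isLt, ha]
  · intro a _ b _ h
    exact Fin.val_injective h
  · intro b hb
    simp only [Finset.mem_filter, Finset.mem_range] at hb
    exact ⟨⟨b, hb.1⟩, by simp [hb.2], rfl⟩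


lemma mem_spec_iff {m : Type*} [Fintype m] [DecidableEq m] (A : Matrix m m ℝ) (μ : ℝ) :
    μ ∈ spectrum ℝ A ↔ ∃ v ≠ 0, A.mulVec v = μ • v := by
  rw [spectrum.mem_iff, Matrix.isUnit_iff_isUnit_det, isUnit_iff_ne_zero, not_not,
    ← Matrix.exists_mulVec_eq_zero_iff]
  have key : ∀ v : m → ℝ, (algebraMap ℝ (Matrix m m ℝ) μ - A).mulVec v = μ • v - A.mulVec v := by
    intro v
    rw [Matrix.sub_mulVec, Algebra.algebraMap_eq_smul_one, Matrix.smul_mulVec,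
      Matrix.one_mulVec]
  constructor
  · rintro ⟨v, hv, h⟩
    exact ⟨v, hv, by rw [key v] at h; exact (sub_eq_zero.mp h).symm⟩
  · rintro ⟨v, hv, h⟩
    exact ⟨v, hv, by rw [key v, h, sub_self]⟩



lemma ceil_div_aux (n r q s : ℕ) (hr0 : 0 < r) (hn : r * q + s = n) (hs : 0 < s)
    (hsr : s < r) : ⌈(n : ℝ) / (r : ℝ)⌉₊ = q + 1 := by
  have hrpos : (0 : ℝ) < r := by exact_mod_cast hr0
  have hnR : (r : ℝ) * q + s = n := by exact_mod_cast hn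
  have hspos : (0 : ℝ) < s := by exact_mod_cast hs
  have hsrR : (s : ℝ) ≤ r := by exact_mod_cast hsr.le
  have hub' : ⌈(n : ℝ) / (r : ℝ)⌉₊ ≤ q + 1 := by
    rw [Nat.ceil_le, div_le_iff₀ hrpos]
    push_cast
    nlinarith [hnR]
  have hlb' : q < ⌈(n : ℝ) / (r : ℝ)⌉₊ := by
    rw [Nat.lt_ceil, lt_div_iff₀ hrpos]
    nlinarith [hnR]
  omega

/-- The spectral radius of the Turán graph `T(n,r)` equals
`(n − 2⌊n/r⌋ − 1 + √((n+1)² − 4(n − r⌊n/r⌋)⌈n/r⌉))/2`; it is at most `n − ⌊n/r⌋`,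
with equality iff `r ∣ n` (i.e. `T(n,r)` is regular). -/
theorem stmt_15 (n r : ℕ) (hr : 1 ≤ r) (hrn : r ≤ n) :
    specRad ((SimpleGraph.turanGraph n r).adjMatrix ℝ) =
      ((n : ℝ) - 2 * (n / r : ℕ) - 1 +
        Real.sqrt (((n : ℝ) + 1) ^ 2 -
          4 * ((n : ℝ) - (r : ℝ) * (n / r : ℕ)) * (⌈(n : ℝ) / (r : ℝ)⌉₊ : ℝ))) / 2 ∧
    specRad ((SimpleGraph.turanGraph n r).adjMatrix ℝ) ≤ (n : ℝ) - (n / r : ℕ) ∧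
      (specRad ((SimpleGraph.turanGraph n r).adjMatrix ℝ) = (n : ℝ) - (n / r : ℕ) ↔
        r ∣ n) := by
  set A : Matrix (Fin n) (Fin n) ℝ := (SimpleGraph.turanGraph n r).adjMatrix ℝ with hA
  clear_value A
  have hr0 : 0 < r := hr
  set q := n / r with hqdef
  set s := n % r with hsdef
  have hsr : s < r := Nat.mod_lt _ hr0
  have hn : r * q + s = n := Nat.div_add_mod n r
  have hq1 : 1 ≤ q := (Nat.one_le_div_iff hr0).mpr hrn
  have hn1 : 1 ≤ n := le_trans hr hrn
  -- real facts
  have hnR : (r : ℝ) * q + s = n := by exact_mod_cast hn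
  have hrR : (1:ℝ) ≤ r := by exact_mod_cast hr
  have hqR : (1:ℝ) ≤ q := by exact_mod_cast hq1
  have hsR : (0:ℝ) ≤ s := by positivity
  clear_value q s
  set D : ℝ := ((n:ℝ) + 1)^2 - 4*s*(q+1) with hDdef
  have hDalt : D = ((n:ℝ) - 2*q - 1)^2 + 4*q*(q+1)*((r:ℝ)-1) := by
    rw [hDdef]; linear_combination (-4*((q:ℝ)+1)) * hnR
  have hterm : (0:ℝ) ≤ 4*q*(q+1)*((r:ℝ)-1) := by
    have h1 : (0:ℝ) ≤ 4*(q:ℝ)*((q:ℝ)+1) := by positivity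
    have h2 : (0:ℝ) ≤ (r:ℝ)-1 := by linarith
    calc (0:ℝ) ≤ (4*(q:ℝ)*((q:ℝ)+1)) * ((r:ℝ)-1) := mul_nonneg h1 h2
    _ = 4*q*(q+1)*((r:ℝ)-1) := by ring
  have hD0 : 0 ≤ D := by
    rw [hDalt]; nlinarith [sq_nonneg ((n:ℝ) - 2*q - 1)]
  set ρ : ℝ := ((n:ℝ) - 2*q - 1 + Real.sqrt D)/2 with hρdef
  have hsq : Real.sqrt D ^ 2 = D := Real.sq_sqrt hD0
  have habs : |(n:ℝ) - 2*q - 1| ≤ Real.sqrt D := by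
    rw [← Real.sqrt_sq_eq_abs]
    apply Real.sqrt_le_sqrt
    rw [hDalt]; linarith [hterm]
  have hρ0 : 0 ≤ ρ := by
    rw [hρdef]
    have := neg_abs_le ((n:ℝ) - 2*q - 1)
    linarith
  have hρsq : ρ^2 = ((n:ℝ) - 2*q - 1) * ρ + q*(q+1)*((r:ℝ)-1) := by
    rw [hρdef]
    linear_combination (1/4:ℝ)*hsq + (1/4:ℝ)*hDalt
  clear_value D ρ
  have hpos1 : 0 < ρ + q := by linarith
  have hpos2 : 0 < ρ + q + 1 := by linarith
  have hsum : ((r:ℝ) - s) * ((q:ℝ) / (ρ + q)) + s * (((q:ℝ)+1)/(ρ + q + 1)) = 1 := by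
    field_simp
    linear_combination (-1 : ℝ) * hρsq + ρ * hnR
  -- counting
  have hfin : ∀ i, i < r → #{v : Fin n | (v : ℕ) % r = i} = q + if i < s then 1 else 0 := by
    intro i hi
    rw [card_residue_fin, card_residue n r i hr0 hi, ← hqdef, ← hsdef]
  set cntR : ℕ → ℝ := fun i => ((q + if i < s then 1 else 0 : ℕ) : ℝ) with hcntR
  set x : Fin n → ℝ := fun v => 1 / (ρ + cntR ((v : ℕ) % r)) with hx
  have hcnt_ge : ∀ i, (q : ℝ) ≤ cntR i := by
    intro i
    rw [hcntR]
    by_cases h : i < s <;> simp [h]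
  have hden_pos : ∀ i, 0 < ρ + cntR i := fun i => by have := hcnt_ge i; linarith
  have hxpos : ∀ v, 0 < x v := fun v => by
    rw [hx]; exact div_pos one_pos (hden_pos _)
  have hT : ∑ v : Fin n, x v = 1 := by
    have hmaps : ∀ v : Fin n, v ∈ Finset.univ → (v : ℕ) % r ∈ Finset.range r :=
      fun v _ => Finset.mem_range.mpr (Nat.mod_lt _ hr0)
    have := Finset.sum_fiberwise_of_maps_to' hmaps (fun j => 1 / (ρ + cntR j))
    rw [hx]
    rw [← this]
    have hinner : ∀ j ∈ Finset.range r,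
        ∑ v ∈ Finset.univ.filter (fun v : Fin n => (v : ℕ) % r = j), (1 / (ρ + cntR j))
          = (q + if j < s then 1 else 0 : ℕ) * (1 / (ρ + cntR j)) := by
      intro j hj
      rw [Finset.sum_const, hfin j (Finset.mem_range.mp hj), nsmul_eq_mul]
    rw [Finset.sum_congr rfl hinner]
    have hsplit : ∑ j ∈ Finset.range r, ((q + if j < s then 1 else 0 : ℕ) : ℝ) * (1 / (ρ + cntR j))
        = ∑ j ∈ Finset.range s, ((q + if j < s then 1 else 0 : ℕ) : ℝ) * (1 / (ρ + cntR j))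
          + ∑ j ∈ Finset.Ico s r, ((q + if j < s then 1 else 0 : ℕ) : ℝ) * (1 / (ρ + cntR j)) := by
      rw [Finset.range_eq_Ico, ← Finset.sum_Ico_consecutive _ (Nat.zero_le s) (le_of_lt hsr),
        ← Finset.range_eq_Ico]
    rw [hsplit]
    have h1 : ∀ j ∈ Finset.range s, ((q + if j < s then 1 else 0 : ℕ) : ℝ) * (1 / (ρ + cntR j))
        = ((q:ℝ)+1) * (1 / (ρ + q + 1)) := by
      intro j hj
      have hj' : j < s := Finset.mem_range.mp hj
      rw [hcntR]
      simp only [hj', if_true]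
      push_cast
      ring_nf
    have h2 : ∀ j ∈ Finset.Ico s r, ((q + if j < s then 1 else 0 : ℕ) : ℝ) * (1 / (ρ + cntR j))
        = (q:ℝ) * (1 / (ρ + q)) := by
      intro j hj
      have hj' : ¬ (j < s) := by have := (Finset.mem_Ico.mp hj).1; omega
      rw [hcntR]
      simp only [hj', if_false]
      push_cast
      ring_nf
    rw [Finset.sum_congr rfl h1, Finset.sum_congr rfl h2, Finset.sum_const, Finset.sum_const,
      Finset.card_range, Nat.card_Ico, nsmul_eq_mul, nsmul_eq_mul]
    have hcast : ((r - s : ℕ) : ℝ) = (r : ℝ) - s := by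
      rw [Nat.cast_sub (le_of_lt hsr)]
    rw [hcast]
    linear_combination hsum
  have hn0 : 0 < n := hn1
  -- the eigenvector equation
  have hAx : A.mulVec x = ρ • x := by
    funext v
    rw [hA, SimpleGraph.adjMatrix_mulVec_apply]
    have hnb : (SimpleGraph.turanGraph n r).neighborFinset v
        = Finset.univ.filter (fun u : Fin n => ¬ ((u : ℕ) % r = (v : ℕ) % r)) := by
      ext u
      simp only [SimpleGraph.mem_neighborFinset, Finset.mem_filter, Finset.mem_univ, true_and]
      constructor
      · intro h; exact fun he => h he.symm
      · intro h he; exact h he.symm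
    have hsplit := Finset.sum_filter_add_sum_filter_not Finset.univ
      (fun u : Fin n => (u : ℕ) % r = (v : ℕ) % r) x
    have hfib : ∑ u ∈ Finset.univ.filter (fun u : Fin n => (u : ℕ) % r = (v : ℕ) % r), x u
        = cntR ((v : ℕ) % r) * x v := by
      have hconst : ∀ u ∈ Finset.univ.filter (fun u : Fin n => (u : ℕ) % r = (v : ℕ) % r),
          x u = x v := by
        intro u hu
        have := (Finset.mem_filter.mp hu).2
        rw [hx]
        simp only
        rw [this]
      rw [Finset.sum_congr rfl hconst, Finset.sum_const,
        hfin ((v : ℕ) % r) (Nat.mod_lt _ hr0), nsmul_eq_mul, hcntR]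
    have hxv : x v = 1 / (ρ + cntR ((v : ℕ) % r)) := by rw [hx]
    have hdp := hden_pos ((v : ℕ) % r)
    have hcg := hcnt_ge ((v : ℕ) % r)
    rw [hnb]
    have : ∑ u ∈ Finset.univ.filter (fun u : Fin n => ¬ ((u : ℕ) % r = (v : ℕ) % r)), x u
        = 1 - cntR ((v : ℕ) % r) * x v := by
      rw [← hfib]; rw [← hT]; linarith [hsplit]
    rw [this]
    have : (ρ • x) v = ρ * x v := rfl
    rw [this, hxv]
    field_simp
    ring
  have hxne : x ≠ 0 := by
    intro h0
    have := hxpos ⟨0, hn0⟩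
    rw [h0] at this
    simp at this
  have hρmem : ρ ∈ spectrum ℝ A := (mem_spec_iff A ρ).mpr ⟨x, hxne, hAx⟩
  have hub : ∀ μ ∈ spectrum ℝ A, μ ≤ ρ := by
    intro μ hμ
    obtain ⟨y, hy0, hAy⟩ := (mem_spec_iff A μ).mp hμ
    obtain ⟨v₀, -, hmax⟩ := Finset.exists_max_image Finset.univ (fun v => |y v| / x v)
      ⟨⟨0, hn0⟩, Finset.mem_univ _⟩
    have hbound : ∀ w, |y w| ≤ (|y v₀| / x v₀) * x w := by
      intro w
      have h := hmax w (Finset.mem_univ w)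
      have hxw := hxpos w
      calc |y w| = (|y w| / x w) * x w := by field_simp
      _ ≤ (|y v₀| / x v₀) * x w := mul_le_mul_of_nonneg_right h (le_of_lt hxw)
    have hv0pos : 0 < |y v₀| := by
      rcases lt_or_ge 0 (|y v₀|) with h | h
      · exact h
      · exfalso
        have h0 : |y v₀| = 0 := le_antisymm h (abs_nonneg _)
        apply hy0
        funext w
        have hw := hbound w
        rw [h0, zero_div, zero_mul] at hw
        exact abs_eq_zero.mp (le_antisymm hw (abs_nonneg _))
    have hnbsum : ∑ u ∈ (SimpleGraph.turanGraph n r).neighborFinset v₀, x u = ρ * x v₀ := by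
      have h1 : (A.mulVec x) v₀ = ρ * x v₀ := by rw [hAx]; rfl
      rw [← h1, hA, SimpleGraph.adjMatrix_mulVec_apply]
    have hkey : |μ| * |y v₀| ≤ ρ * |y v₀| := by
      have h1 : (A.mulVec y) v₀ = μ * y v₀ := by rw [hAy]; rfl
      have h2 : (A.mulVec y) v₀ = ∑ u ∈ (SimpleGraph.turanGraph n r).neighborFinset v₀, y u := by
        rw [hA, SimpleGraph.adjMatrix_mulVec_apply]
      have hx0 : x v₀ ≠ 0 := ne_of_gt (hxpos v₀)
      calc |μ| * |y v₀| = |μ * y v₀| := (abs_mul _ _).symm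
      _ = |∑ u ∈ (SimpleGraph.turanGraph n r).neighborFinset v₀, y u| := by rw [← h1, h2]
      _ ≤ ∑ u ∈ (SimpleGraph.turanGraph n r).neighborFinset v₀, |y u| :=
          Finset.abs_sum_le_sum_abs _ _
      _ ≤ ∑ u ∈ (SimpleGraph.turanGraph n r).neighborFinset v₀, (|y v₀| / x v₀) * x u :=
          Finset.sum_le_sum (fun u _ => hbound u)
      _ = (|y v₀| / x v₀) * ∑ u ∈ (SimpleGraph.turanGraph n r).neighborFinset v₀, x u :=
          (Finset.mul_sum _ _ _).symm
      _ = (|y v₀| / x v₀) * (ρ * x v₀) := by rw [hnbsum]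
      _ = ρ * |y v₀| := by field_simp
    exact le_trans (le_abs_self μ) (le_of_mul_le_mul_right hkey hv0pos)
  have hspec : specRad A = ρ := by
    unfold specRad
    exact le_antisymm (csSup_le ⟨ρ, hρmem⟩ hub)
      (le_csSup ⟨ρ, fun μ hμ => hub μ hμ⟩ hρmem)
  -- the ceiling
  have harg : (n : ℝ) - (r : ℝ) * q = s := by linarith
  have hDeq : ((n : ℝ) + 1) ^ 2 -
      4 * ((n : ℝ) - (r : ℝ) * q) * (⌈(n : ℝ) / (r : ℝ)⌉₊ : ℝ) = D := by
    rw [harg, hDdef]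
    by_cases hs0 : s = 0
    · rw [hs0]; push_cast; ring
    · have hceil : ⌈(n : ℝ) / (r : ℝ)⌉₊ = q + 1 :=
        ceil_div_aux n r q s hr0 hn (Nat.pos_of_ne_zero hs0) hsr
      rw [hceil]
      push_cast
      ring
  refine ⟨?_, ?_, ?_⟩
  · rw [hspec, hρdef, hDeq]
  · rw [hspec, hρdef]
    have hle : D ≤ ((n : ℝ) + 1) ^ 2 := by
      rw [hDdef]
      have : (0:ℝ) ≤ 4 * (s:ℝ) * ((q:ℝ) + 1) := by positivity
      linarith
    have h1 := Real.sqrt_le_sqrt hle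
    rw [Real.sqrt_sq (by positivity : (0:ℝ) ≤ (n:ℝ) + 1)] at h1
    linarith
  · rw [hspec]
    constructor
    · intro h
      rw [hρdef] at h
      have hsq' : Real.sqrt D = (n : ℝ) + 1 := by linarith
      have hDval : D = ((n : ℝ) + 1) ^ 2 := by rw [← hsq, hsq']
      rw [hDdef] at hDval
      have hmul : (s : ℝ) * ((q : ℝ) + 1) = 0 := by linarith
      have hq0 : ((q : ℝ) + 1) ≠ 0 := by positivity
      have hs0 : (s : ℝ) = 0 := by
        rcases mul_eq_zero.mp hmul with h' | h'
        · exact h'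
        · exact absurd h' hq0
      have : s = 0 := by exact_mod_cast hs0
      exact Nat.dvd_of_mod_eq_zero (by omega)
    · intro hdvd
      have hs0 : s = 0 := by
        have := Nat.mod_eq_zero_of_dvd hdvd
        omega
      have hDval : D = ((n : ℝ) + 1) ^ 2 := by
        rw [hDdef, hs0]; push_cast; ring
      have hsq' : Real.sqrt D = (n : ℝ) + 1 := by
        rw [hDval, Real.sqrt_sq (by positivity : (0:ℝ) ≤ (n:ℝ) + 1)]
      rw [hρdef, hsq']
      ring
end

section
/- Let F₂ be the graph obtained from the 5-vertex reduced graph G₁ (with edges v₁v₂, v₁v₃, v₁v₄, v₂v₄, v₃v₅) by multiplication of vertices with multiplicities (1,1,1,2,n−5), and F₁ the same with multiplicities (1,1,1,1,n−4). Then for n ≥ 19, ρ(F₁) > ρ(F₂). -/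
attribute [local instance] Classical.propDecidable

/-- Multiplication of vertices: `G ∘ (n₁,…,n_k)`. -/
def blowup {k : ℕ} (G : SimpleGraph (Fin k)) (n : Fin k → ℕ) :
    SimpleGraph (Σ i, Fin (n i)) :=
  G.comap Sigma.fst

/-- The reduced graph `G₁` on `{v₁,…,v₅}` with edges
`v₁v₂, v₁v₃, v₁v₄, v₂v₄, v₃v₅` (0-indexed). -/
def G₁ : SimpleGraph (Fin 5) :=
  SimpleGraph.fromEdgeSet
    {Sym2.mk 0 1, Sym2.mk 0 2, Sym2.mk 0 3, Sym2.mk 1 3, Sym2.mk 2 4}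

section SpecAux
open Matrix
variable {V : Type*} [Fintype V] [DecidableEq V] {A : Matrix V V ℝ}

lemma spectrum_bddAbove : BddAbove (spectrum ℝ A) := (A.finite_spectrum).bddAbove

lemma specRad_mem [Nonempty V] (hA : A.IsHermitian) : specRad A ∈ spectrum ℝ A := by
  rw [specRad, hA.spectrum_real_eq_range_eigenvalues]
  exact (Set.range_nonempty _).csSup_mem (Set.finite_range _)

lemma le_specRad {μ : ℝ} (hμ : μ ∈ spectrum ℝ A) : μ ≤ specRad A :=
  le_csSup spectrum_bddAbove hμ

lemma exists_eigenvector [Nonempty V] (hA : A.IsHermitian) {μ : ℝ} (hμ : μ ∈ spectrum ℝ A) :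
    ∃ v : V → ℝ, v ≠ 0 ∧ A *ᵥ v = μ • v := by
  rw [hA.spectrum_real_eq_range_eigenvalues] at hμ
  obtain ⟨i, rfl⟩ := hμ
  refine ⟨⇑(hA.eigenvectorBasis i), ?_, hA.mulVec_eigenvectorBasis i⟩
  have hnz := (hA.eigenvectorBasis).orthonormal.ne_zero i
  intro h
  exact hnz (by ext j; exact congrFun h j)

lemma rayleigh_le_specRad [Nonempty V] (hA : A.IsHermitian) (x : V → ℝ) :
    x ⬝ᵥ (A *ᵥ x) ≤ specRad A * (x ⬝ᵥ x) := by
  set c := specRad A with hc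
  have hM : (c • (1 : Matrix V V ℝ) - A).PosSemidef := by
    have hMh : (c • (1 : Matrix V V ℝ) - A).IsHermitian := by
      refine Matrix.IsHermitian.sub ?_ hA
      unfold Matrix.IsHermitian
      rw [Matrix.conjTranspose_smul, Matrix.conjTranspose_one, star_trivial]
    refine hMh.posSemidef_iff_eigenvalues_nonneg.mpr fun i => ?_
    have hmem := hMh.eigenvalues_mem_spectrum_real i
    have halg : c • (1 : Matrix V V ℝ) - A = (algebraMap ℝ (Matrix V V ℝ)) c - A := by
      rw [Algebra.algebraMap_eq_smul_one]
    have hmem2 : hMh.eigenvalues i ∈ spectrum ℝ ((algebraMap ℝ (Matrix V V ℝ)) c - A) := by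
      rw [← halg]; exact hmem
    rw [← spectrum.singleton_sub_eq] at hmem2
    obtain ⟨r, hr, s, hs, heq⟩ := Set.mem_sub.mp hmem2
    rw [Set.mem_singleton_iff] at hr
    have := le_specRad hs
    rw [← heq, hr, Pi.zero_apply]
    linarith
  have h2 := hM.dotProduct_mulVec_nonneg x
  simp only [Matrix.sub_mulVec, Matrix.smul_mulVec, Matrix.one_mulVec,
    dotProduct_sub, dotProduct_smul, star_trivial, smul_eq_mul] at h2
  linarith

end SpecAux

section GraphAux
open Matrix Finset

/-- The adjacency matrix of `G₁` as an explicit matrix. -/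
def bmat : Matrix (Fin 5) (Fin 5) ℝ :=
  !![0,1,1,1,0; 1,0,0,1,0; 1,0,0,0,1; 1,1,0,0,0; 0,0,1,0,0]

lemma hadjG1 (i j : Fin 5) : G₁.Adj i j ↔
    ((i=0∧j=1)∨(i=1∧j=0))∨((i=0∧j=2)∨(i=2∧j=0))∨((i=0∧j=3)∨(i=3∧j=0))∨
      ((i=1∧j=3)∨(i=3∧j=1))∨((i=2∧j=4)∨(i=4∧j=2)) := by
  simp only [G₁, SimpleGraph.fromEdgeSet_adj, Set.mem_insert_iff, Set.mem_singleton_iff,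
    Sym2.eq_iff, ne_eq]
  constructor
  · rintro ⟨h, hne⟩; tauto
  · intro h
    constructor
    · tauto
    · rintro rfl
      rcases h with (⟨h1,h2⟩|⟨h1,h2⟩)|(⟨h1,h2⟩|⟨h1,h2⟩)|(⟨h1,h2⟩|⟨h1,h2⟩)|(⟨h1,h2⟩|⟨h1,h2⟩)|(⟨h1,h2⟩|⟨h1,h2⟩) <;> simp_all

lemma g1val (i j : Fin 5) : (if G₁.Adj i j then (1:ℝ) else 0) = bmat i j := by
  rw [if_congr (hadjG1 i j) rfl rfl]
  fin_cases i <;> fin_cases j <;> simp [bmat, Matrix.vecHead, Matrix.vecTail]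

lemma bmat_symm (i j : Fin 5) : bmat i j = bmat j i := by
  fin_cases i <;> fin_cases j <;> simp [bmat, Matrix.vecHead, Matrix.vecTail]

variable (ns : Fin 5 → ℕ)

lemma blowup_entry (u v : Σ i, Fin (ns i)) :
    (blowup G₁ ns).adjMatrix ℝ u v = bmat u.1 v.1 := by
  rw [SimpleGraph.adjMatrix_apply]
  have h : (blowup G₁ ns).Adj u v ↔ G₁.Adj u.1 v.1 := Iff.rfl
  rw [if_congr h rfl rfl, g1val]

lemma blowup_herm : ((blowup G₁ ns).adjMatrix ℝ).IsHermitian := by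
  ext u v
  rw [Matrix.conjTranspose_apply, star_trivial, blowup_entry, blowup_entry]
  exact bmat_symm v.1 u.1

lemma sum_sigma_fst (f : Fin 5 → ℝ) :
    ∑ u : Σ i, Fin (ns i), f u.1 = ∑ i, (ns i : ℝ) * f i := by
  rw [← Finset.univ_sigma_univ, Finset.sum_sigma]
  simp [Finset.sum_const, nsmul_eq_mul]

lemma dot_lift (s t : Fin 5 → ℝ) :
    (fun u : Σ i, Fin (ns i) => s u.1) ⬝ᵥ (fun u => t u.1) = ∑ i, (ns i : ℝ) * (s i * t i) := by
  rw [dotProduct]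
  exact sum_sigma_fst ns (fun i => s i * t i)

lemma mulVec_blowup (y : (Σ i, Fin (ns i)) → ℝ) (u : Σ i, Fin (ns i)) :
    ((blowup G₁ ns).adjMatrix ℝ *ᵥ y) u
      = ∑ j, bmat u.1 j * (∑ q : Fin (ns j), y ⟨j, q⟩) := by
  rw [Matrix.mulVec, dotProduct]
  rw [← Finset.univ_sigma_univ, Finset.sum_sigma]
  refine Finset.sum_congr rfl fun j _ => ?_
  rw [Finset.mul_sum]
  refine Finset.sum_congr rfl fun q _ => ?_
  rw [blowup_entry]

lemma quad_lift (t : Fin 5 → ℝ) :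
    (fun u : Σ i, Fin (ns i) => t u.1) ⬝ᵥ ((blowup G₁ ns).adjMatrix ℝ *ᵥ fun u => t u.1)
      = ∑ i, (ns i : ℝ) * (t i * ∑ j, (ns j : ℝ) * (bmat i j * t j)) := by
  have h : ((blowup G₁ ns).adjMatrix ℝ *ᵥ fun u : Σ i, Fin (ns i) => t u.1)
      = fun u => ∑ j, (ns j : ℝ) * (bmat u.1 j * t j) := by
    funext u
    rw [mulVec_blowup]
    refine Finset.sum_congr rfl fun j _ => ?_
    simp only [Finset.sum_const, Finset.card_univ, Fintype.card_fin, nsmul_eq_mul]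
    ring
  rw [h, dotProduct]
  exact sum_sigma_fst ns (fun i => t i * ∑ j, (ns j : ℝ) * (bmat i j * t j))

end GraphAux

open Matrix in
set_option maxHeartbeats 1000000 in
/-- For `n ≥ 19`, `ρ(G₁∘(1,1,1,1,n−4)) > ρ(G₁∘(1,1,1,2,n−5))`. -/
theorem stmt_18 (n : ℕ) (hn : 19 ≤ n) :
    specRad ((blowup G₁ ![1, 1, 1, 2, n - 5]).adjMatrix ℝ) <
      specRad ((blowup G₁ ![1, 1, 1, 1, n - 4]).adjMatrix ℝ) := by
  set ns2 : Fin 5 → ℕ := ![1, 1, 1, 2, n - 5] with hns2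
  set ns1 : Fin 5 → ℕ := ![1, 1, 1, 1, n - 4] with hns1
  have hpos2 : ∀ i, 0 < ns2 i := by
    intro i; fin_cases i <;> simp [hns2] <;> omega
  haveI hne2 : Nonempty (Σ i, Fin (ns2 i)) := ⟨⟨0, ⟨0, hpos2 0⟩⟩⟩
  haveI hne1 : Nonempty (Σ i, Fin (ns1 i)) := ⟨⟨0, ⟨0, by simp [hns1]⟩⟩⟩
  set m : ℝ := (n : ℝ) - 5 with hmdef
  have hm : ((n - 5 : ℕ) : ℝ) = m := by
    rw [Nat.cast_sub (by omega : 5 ≤ n)]; norm_num [hmdef]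
  have hm4 : ((n - 4 : ℕ) : ℝ) = m + 1 := by
    rw [Nat.cast_sub (by omega : 4 ≤ n)]; rw [hmdef]; push_cast; ring
  have hm14 : (14 : ℝ) ≤ m := by
    rw [hmdef]
    have : (19 : ℝ) ≤ (n : ℝ) := by exact_mod_cast hn
    linarith
  have herm2 := blowup_herm ns2
  have herm1 := blowup_herm ns1
  set lam := specRad ((blowup G₁ ns2).adjMatrix ℝ) with hlamdef
  set rho := specRad ((blowup G₁ ns1).adjMatrix ℝ) with hrhodef
  -- lower bound on lam via a Rayleigh quotient
  have hray2 : 8 * m ≤ lam * (16 + m) := by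
    have h := rayleigh_le_specRad herm2 (fun u => (![0,0,4,0,1] : Fin 5 → ℝ) u.1)
    rw [quad_lift, dot_lift] at h
    simp only [Fin.sum_univ_five, hns2] at h
    simp [bmat, hm] at h
    linarith
  have hlam : (37 : ℝ)/10 ≤ lam := by nlinarith [hray2, hm14]
  have hlam0 : lam ≠ 0 := by intro h; rw [h] at hlam; norm_num at hlam
  -- extract an eigenvector of the second blowup for lam
  obtain ⟨y, hy0, hyeig⟩ := exists_eigenvector herm2 (specRad_mem herm2)
  have hrow : ∀ u : Σ i, Fin (ns2 i),
      lam * y u = ∑ j, bmat u.1 j * (∑ q : Fin (ns2 j), y ⟨j, q⟩) := by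
    intro u
    have h := congrFun hyeig u
    rw [mulVec_blowup] at h
    rw [hlamdef]
    simpa using h.symm
  set t : Fin 5 → ℝ :=
    fun i => (∑ j, bmat i j * (∑ q : Fin (ns2 j), y ⟨j, q⟩)) / lam with htdef
  have hyt : ∀ u : Σ i, Fin (ns2 i), y u = t u.1 := by
    intro u
    rw [htdef]
    rw [eq_div_iff hlam0, mul_comm]
    exact hrow u
  have hz : ∀ j, (∑ q : Fin (ns2 j), y ⟨j, q⟩) = (ns2 j : ℝ) * t j := by
    intro j
    have : ∀ q : Fin (ns2 j), y ⟨j, q⟩ = t j := fun q => hyt ⟨j, q⟩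
    rw [Finset.sum_congr rfl (fun q _ => this q)]
    simp [Finset.sum_const, Finset.card_univ, nsmul_eq_mul]
  have heig : ∀ i, lam * t i = ∑ j, (ns2 j : ℝ) * (bmat i j * t j) := by
    intro i
    have h := hrow ⟨i, ⟨0, hpos2 i⟩⟩
    rw [hyt ⟨i, ⟨0, hpos2 i⟩⟩] at h
    rw [h]
    exact Finset.sum_congr rfl fun j _ => by rw [hz j]; ring
  clear_value t lam rho m
  -- the five scalar eigen-equations
  have e0 : lam * t 0 = t 1 + t 2 + 2 * t 3 := by
    have h := heig 0
    rw [Fin.sum_univ_five] at h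
    simp [hns2, bmat, hm] at h
    linarith
  have e1 : lam * t 1 = t 0 + 2 * t 3 := by
    have h := heig 1
    rw [Fin.sum_univ_five] at h
    simp [hns2, bmat, hm] at h
    linarith
  have e2 : lam * t 2 = t 0 + m * t 4 := by
    have h := heig 2
    rw [Fin.sum_univ_five] at h
    simp [hns2, bmat, hm] at h
    linarith
  have e3 : lam * t 3 = t 0 + t 1 := by
    have h := heig 3
    rw [Fin.sum_univ_five] at h
    simp [hns2, bmat, hm] at h
    linarith
  have e4 : lam * t 4 = t 2 := by
    have h := heig 4
    rw [Fin.sum_univ_five] at h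
    simp [hns2, bmat, hm] at h
    linarith
  -- consequences of the eigen-equations
  have ht1 : (lam^2 - 2) * t 1 = (lam + 2) * t 0 := by linear_combination lam * e1 + 2 * e3
  have hd2t3 : (lam^2 - 2) * t 3 = (lam + 1) * t 0 := by linear_combination lam * e3 + e1
  have hdm4 : (lam^2 - m) * t 4 = t 0 := by linear_combination lam * e4 + e2
  have hD2 : (0:ℝ) < lam^2 - 2 := by nlinarith [hlam]
  have hT0 : t 0 ≠ 0 := by
    intro h0
    have h1 : t 1 = 0 := by
      have := ht1; rw [h0] at this
      have := (mul_eq_zero.mp (by linarith : (lam^2 - 2) * t 1 = 0))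
      rcases this with h | h
      · exact absurd h (ne_of_gt hD2)
      · exact h
    have h3 : t 3 = 0 := by
      have := hd2t3; rw [h0] at this
      have := (mul_eq_zero.mp (by linarith : (lam^2 - 2) * t 3 = 0))
      rcases this with h | h
      · exact absurd h (ne_of_gt hD2)
      · exact h
    have h2 : t 2 = 0 := by
      have := e0; rw [h0, h1, h3] at this; linarith
    have h4 : t 4 = 0 := by
      have := e4; rw [h2] at this
      rcases mul_eq_zero.mp this with h | h
      · exact absurd h hlam0
      · exact h
    apply hy0
    funext u
    have hall : ∀ i, t i = 0 := by intro i; fin_cases i <;> assumption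
    rw [Pi.zero_apply, hyt u, hall]
  have ht0sq : 0 < t 0 ^ 2 :=
    lt_of_le_of_ne (sq_nonneg _) (Ne.symm (pow_ne_zero 2 hT0))
  have hDm : lam^2 - m ≠ 0 := by
    intro h
    exact hT0 (by rw [← hdm4, h, zero_mul])
  -- characteristic identity
  have hchar0 : ((lam^2 - m) * (lam^3 - 5*lam - 4)) * t 0 = (lam * (lam^2 - 2)) * t 0 := by
    linear_combination ((lam^2-m)*(lam^2-2)) * e0 + (lam^2-m) * ht1 + (lam*(lam^2-2)) * hdm4
      - ((lam^2-2)*(lam^2-m)) * e4 + (2*(lam^2-m)) * hd2t3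
  have hchar : (lam^2 - m) * (lam^3 - 5*lam - 4) = lam * (lam^2 - 2) :=
    mul_right_cancel₀ hT0 hchar0
  have hP : (0:ℝ) < lam^3 - 5*lam - 4 := by nlinarith [hlam]
  have hQ : lam^2 + lam < lam^3 - 5*lam - 4 := by nlinarith [hlam]
  -- key inequality between the squares
  have hstep : (lam^2 - m)^2 * (lam + 1)^2 < (lam^2 - 2)^2 := by
    have h1 : ((lam^2-m) * (lam^3-5*lam-4))^2 = (lam * (lam^2-2))^2 := by rw [hchar]
    have hposa : (0:ℝ) < lam^2 + lam := by nlinarith [hlam]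
    have h2 : (lam^2+lam)^2 < (lam^3-5*lam-4)^2 := by nlinarith [hQ, hposa]
    have h3 : (0:ℝ) < (lam^2-m)^2 :=
      lt_of_le_of_ne (sq_nonneg _) (Ne.symm (pow_ne_zero 2 hDm))
    have h4 : lam^2 * ((lam^2-m)^2*(lam+1)^2) < lam^2 * ((lam^2-2)^2) := by
      nlinarith [mul_lt_mul_of_pos_left h2 h3, h1]
    exact lt_of_mul_lt_mul_left h4 (by positivity)
  have hkey : t 3 ^ 2 < t 4 ^ 2 := by
    have h1 : (lam^2-2)^2 * t 3^2 = (lam+1)^2 * t 0^2 := by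
      linear_combination ((lam^2-2) * t 3 + (lam+1) * t 0) * hd2t3
    have h2 : (lam^2-m)^2 * t 4^2 = t 0^2 := by
      linear_combination ((lam^2-m) * t 4 + t 0) * hdm4
    have hDmsq : (0:ℝ) < (lam^2-m)^2 :=
      lt_of_le_of_ne (sq_nonneg _) (Ne.symm (pow_ne_zero 2 hDm))
    have hD2sq : (0:ℝ) < (lam^2-2)^2 := by positivity
    have hfinal : ((lam^2-2)^2*(lam^2-m)^2) * t 3^2 < ((lam^2-2)^2*(lam^2-m)^2) * t 4^2 := by
      have ha : ((lam^2-2)^2*(lam^2-m)^2) * t 3^2 = (lam^2-m)^2 * ((lam+1)^2 * t 0^2) := by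
        linear_combination (lam^2-m)^2 * h1
      have hb : ((lam^2-2)^2*(lam^2-m)^2) * t 4^2 = (lam^2-2)^2 * t 0^2 := by
        linear_combination (lam^2-2)^2 * h2
      rw [ha, hb, ← mul_assoc]
      exact mul_lt_mul_of_pos_right hstep ht0sq
    exact lt_of_mul_lt_mul_left hfinal (le_of_lt (mul_pos hD2sq hDmsq))
  -- Rayleigh quotient for the first blowup with test vector t
  have hray1 : 2*(t 0*t 1) + 2*(t 0*t 2) + 2*(t 0*t 3) + 2*(t 1*t 3) + 2*((m+1)*(t 2*t 4))
      ≤ rho * (t 0^2 + t 1^2 + t 2^2 + t 3^2 + (m+1)*t 4^2) := by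
    have h := rayleigh_le_specRad herm1 (fun u : Σ i, Fin (ns1 i) => t u.1)
    rw [quad_lift, dot_lift] at h
    simp only [Fin.sum_univ_five, hns1] at h
    simp [bmat, hm4] at h
    rw [← hrhodef] at h
    ring_nf at h ⊢
    linarith
  have hNpos : (0:ℝ) < t 0^2 + t 1^2 + t 2^2 + t 3^2 + (m+1)*t 4^2 := by
    nlinarith [sq_nonneg (t 1), sq_nonneg (t 2), sq_nonneg (t 3), sq_nonneg (t 4), ht0sq, hm14]
  have HQeq : 2*(t 0*t 1) + 2*(t 0*t 2) + 2*(t 0*t 3) + 2*(t 1*t 3) + 2*((m+1)*(t 2*t 4))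
      = lam * (t 0^2 + t 1^2 + t 2^2 + t 3^2 + (m+1)*t 4^2) + lam * (t 4^2 - t 3^2) := by
    linear_combination (-(t 0)) * e0 - t 1 * e1 - t 2 * e2 - (m+2) * t 4 * e4
  have hposgain : 0 < lam * (t 4^2 - t 3^2) := by
    have : (0:ℝ) < lam := by linarith
    exact mul_pos this (by linarith)
  have hmul : lam * (t 0^2 + t 1^2 + t 2^2 + t 3^2 + (m+1)*t 4^2)
      < rho * (t 0^2 + t 1^2 + t 2^2 + t 3^2 + (m+1)*t 4^2) := by linarith
  exact lt_of_mul_lt_mul_right (by linarith [hmul]) (le_of_lt hNpos)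
end
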